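/- arXiv:1401.3723 — 9 statements merged into one kernel-verified Lean document; each statement's English description precedes it below -/
import Mathlib

section
/- Let (X,𝒳), (Y,𝒴), (Z,𝒵) be measurable spaces with X a finite set and 𝒳 its power set, and let q, r be probability measures on (X,𝒳)⊗(Z,𝒵) and (Y,𝒴)⊗(Z,𝒵) with the same marginal on Z. Then the fiber product q⊗_Z r exists. -/
open MeasureTheory Set

/-- The conditional probability `p[S‖m]` of an event `S` given a sub-σ-algebra `m`:
the conditional expectation, with respect to `p`, of the indicator function of `S` given `m`. -/
noncomputable def condProb {α : Type*} [MeasurableSpace α]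
    (p : Measure α) (m : MeasurableSpace α) (S : Set α) : α → ℝ :=
  MeasureTheory.condExp m p (S.indicator fun _ => (1 : ℝ))

/-- `f : Z → ℝ` is a (measurable) version of the conditional probability, with respect to `p`,
of the event `S` given the coordinate projection `π : α → Z`. -/
def IsCondVersion {α Z : Type*} [MeasurableSpace α] [MeasurableSpace Z]
    (p : Measure α) (π : α → Z) (S : Set α) (f : Z → ℝ) : Prop :=
  Measurable f ∧
    (fun a => f (π a)) =ᵐ[p] condProb p (MeasurableSpace.comap π inferInstance) S

open ENNReal

section Helpers

variable {W Z : Type*} [MeasurableSpace W] [MeasurableSpace Z]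

lemma condVersion_integrable (μ : Measure (W × Z)) [IsProbabilityMeasure μ]
    {S : Set (W × Z)} {f : Z → ℝ} (hf : IsCondVersion μ Prod.snd S f) :
    Integrable f (μ.map Prod.snd) := by
  rw [integrable_map_measure hf.1.aestronglyMeasurable measurable_snd.aemeasurable]
  exact integrable_condExp.congr hf.2.symm

lemma condVersion_setIntegral_mul (μ : Measure (W × Z)) [IsProbabilityMeasure μ]
    {S : Set W} (hS : MeasurableSet S) {g : Z → ℝ}
    (hg : IsCondVersion μ Prod.snd (S ×ˢ univ) g)
    {h : Z → ℝ} (hh : Measurable h) (hbd : ∀ z, ‖h z‖ ≤ 1)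
    {L : Set Z} (hL : MeasurableSet L) :
    ∫ z in L, h z * g z ∂(μ.map Prod.snd) = ∫ w in S ×ˢ L, h w.2 ∂μ := by
  have hm : MeasurableSpace.comap (Prod.snd : W × Z → Z) inferInstance ≤ Prod.instMeasurableSpace :=
    measurable_snd.comap_le
  have hLm : MeasurableSet[MeasurableSpace.comap (Prod.snd : W × Z → Z) inferInstance]
      ((Prod.snd : W × Z → Z) ⁻¹' L) := ⟨L, hL, rfl⟩
  have hsndm : Measurable[MeasurableSpace.comap (Prod.snd : W × Z → Z) inferInstance]
      (Prod.snd : W × Z → Z) := Measurable.of_comap_le le_rfl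
  have hind : Integrable ((S ×ˢ (univ : Set Z)).indicator fun _ => (1 : ℝ)) μ :=
    (integrable_const 1).indicator (hS.prod MeasurableSet.univ)
  have hhm : StronglyMeasurable[MeasurableSpace.comap (Prod.snd : W × Z → Z) inferInstance] (fun w : W × Z => h w.2) :=
    (hh.comp hsndm).stronglyMeasurable
  have hpull := condExp_stronglyMeasurable_mul_of_bound hm hhm hind 1
    (Filter.Eventually.of_forall fun w => hbd w.2)
  have hmul_int : Integrable ((fun w : W × Z => h w.2) *
      ((S ×ˢ (univ : Set Z)).indicator fun _ => (1 : ℝ))) μ :=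
    hind.bdd_mul (hh.comp measurable_snd).aestronglyMeasurable (Filter.Eventually.of_forall fun w => hbd w.2)
  rw [setIntegral_map (f := fun z => h z * g z) hL ((hh.mul hg.1).aestronglyMeasurable)
    measurable_snd.aemeasurable]
  calc ∫ w in (Prod.snd : W × Z → Z) ⁻¹' L, h w.2 * g w.2 ∂μ
      = ∫ w in (Prod.snd : W × Z → Z) ⁻¹' L,
          ((fun w : W × Z => h w.2) * condProb μ (MeasurableSpace.comap (Prod.snd : W × Z → Z) inferInstance) (S ×ˢ univ)) w ∂μ := by
        refine setIntegral_congr_ae (hm _ hLm) ?_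
        filter_upwards [hg.2] with w hw _
        simp only [Pi.mul_apply]
        rw [hw]
    _ = ∫ w in (Prod.snd : W × Z → Z) ⁻¹' L,
          (μ[(fun w : W × Z => h w.2) *
            ((S ×ˢ (univ : Set Z)).indicator fun _ => (1 : ℝ))|MeasurableSpace.comap (Prod.snd : W × Z → Z) inferInstance]) w ∂μ := by
        refine setIntegral_congr_ae (hm _ hLm) ?_
        filter_upwards [hpull] with w hw _
        exact hw.symm
    _ = ∫ w in (Prod.snd : W × Z → Z) ⁻¹' L,
          ((fun w : W × Z => h w.2) *
            ((S ×ˢ (univ : Set Z)).indicator fun _ => (1 : ℝ))) w ∂μ :=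
        setIntegral_condExp hm hmul_int hLm
    _ = ∫ w in (Prod.snd : W × Z → Z) ⁻¹' L,
          ((S ×ˢ (univ : Set Z)).indicator fun w : W × Z => h w.2) w ∂μ := by
        refine setIntegral_congr_ae (hm _ hLm) (Filter.Eventually.of_forall fun w _ => ?_)
        by_cases hw : w ∈ S ×ˢ (univ : Set Z) <;> simp [hw]
    _ = ∫ w in (Prod.snd : W × Z → Z) ⁻¹' L ∩ S ×ˢ (univ : Set Z), h w.2 ∂μ :=
        setIntegral_indicator (hS.prod MeasurableSet.univ)
    _ = ∫ w in S ×ˢ L, h w.2 ∂μ := by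
        rw [show (Prod.snd : W × Z → Z) ⁻¹' L ∩ S ×ˢ (univ : Set Z) = S ×ˢ L by
          ext ⟨a, b⟩; simp [Set.mem_prod, and_comm]]

lemma condVersion_setIntegral (μ : Measure (W × Z)) [IsProbabilityMeasure μ]
    {S : Set W} (hS : MeasurableSet S) {g : Z → ℝ}
    (hg : IsCondVersion μ Prod.snd (S ×ˢ univ) g)
    {L : Set Z} (hL : MeasurableSet L) :
    ∫ z in L, g z ∂(μ.map Prod.snd) = (μ (S ×ˢ L)).toReal := by
  have := condVersion_setIntegral_mul μ hS hg (measurable_const : Measurable fun _ : Z => (1:ℝ))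
    (fun z => by simp) hL
  simp at this
  exact this

end Helpers

/-- `p` is the fiber product `q ⊗_Z r` of `q` and `r` over `Z`:  for all measurable
`J ⊆ X`, `K ⊆ Y`, `L ⊆ Z`, `p (J ×ˢ K ×ˢ L) = ∫_L q[J‖𝒵]_z * r[K‖𝒵]_z ds(z)`, where `s` is
the common marginal of `q` and `r` on `Z` and `q[J‖𝒵]`, `r[K‖𝒵]` stand for (any measurable
versions of) the conditional probabilities of `J`, `K` given the `Z`-coordinate. -/
def IsFiberProduct {X Y Z : Type*}
    [MeasurableSpace X] [MeasurableSpace Y] [MeasurableSpace Z]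
    (q : Measure (X × Z)) (r : Measure (Y × Z)) (p : Measure (X × Y × Z)) : Prop :=
  ∀ (J : Set X) (K : Set Y) (L : Set Z),
    MeasurableSet J → MeasurableSet K → MeasurableSet L →
    ∀ f g : Z → ℝ,
      IsCondVersion q (Prod.snd : X × Z → Z) (J ×ˢ (univ : Set Z)) f →
      IsCondVersion r (Prod.snd : Y × Z → Z) (K ×ˢ (univ : Set Z)) g →
      (p (J ×ˢ K ×ˢ L)).toReal = ∫ z in L, f z * g z ∂(q.map (Prod.snd : X × Z → Z))

/-- **Corollary.**  Let `q`, `r` be probability measures on `X × Z`, `Y × Z` with the same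
marginal on `Z`, where `X` is a finite set equipped with its power-set σ-algebra.  Then the
fiber product `q ⊗_Z r` exists. -/
theorem fiberProduct_exists_of_finite {X Y Z : Type*}
    [MeasurableSpace X] [Finite X] [DiscreteMeasurableSpace X]
    [MeasurableSpace Y] [MeasurableSpace Z]
    (q : Measure (X × Z)) (r : Measure (Y × Z))
    [IsProbabilityMeasure q] [IsProbabilityMeasure r]
    (hs : q.map (Prod.snd : X × Z → Z) = r.map (Prod.snd : Y × Z → Z)) :
    ∃ p : Measure (X × Y × Z), IsProbabilityMeasure p ∧ IsFiberProduct q r p := by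
  classical
  haveI : Fintype X := Fintype.ofFinite X
  set s : Measure Z := q.map (Prod.snd : X × Z → Z) with hs_def
  haveI : IsProbabilityMeasure s := Measure.isProbabilityMeasure_map measurable_snd.aemeasurable
  have hrsnd : r.map (Prod.snd : Y × Z → Z) = s := hs.symm
  -- slice measures of q on Z
  set qx : X → Measure Z := fun x => (q.restrict (({x} : Set X) ×ˢ univ)).map Prod.snd
    with hqx_def
  haveI hqxf : ∀ x, IsFiniteMeasure (qx x) := fun x =>
    ⟨by rw [hqx_def, Measure.map_apply measurable_snd MeasurableSet.univ]
        exact (measure_lt_top _ _)⟩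
  have hqx : ∀ (x : X) {L : Set Z}, MeasurableSet L → qx x L = q (({x} : Set X) ×ˢ L) := by
    intro x L hL
    rw [hqx_def, Measure.map_apply measurable_snd hL,
      Measure.restrict_apply (measurable_snd hL)]
    congr 1
    ext ⟨a, b⟩
    simp only [Set.mem_inter_iff, Set.mem_preimage, Set.mem_prod, Set.mem_singleton_iff,
      Set.mem_univ, and_true]
    tauto
  have hqx_le : ∀ x, qx x ≤ s := by
    intro x
    refine Measure.le_iff.mpr fun L hL => ?_
    rw [hqx x hL, hs_def, Measure.map_apply measurable_snd hL]
    exact measure_mono fun w hw => hw.2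
  have hqx_ac : ∀ x, qx x ≪ s := fun x => (hqx_le x).absolutelyContinuous
  set φ : X → Z → ℝ≥0∞ := fun x => (qx x).rnDeriv s with hφ_def
  have hφm : ∀ x, Measurable (φ x) := fun x => Measure.measurable_rnDeriv _ _
  have hφ_int : ∀ (x : X) (L : Set Z), ∫⁻ z in L, φ x z ∂s = qx x L := fun x L =>
    Measure.setLIntegral_rnDeriv (hqx_ac x) L
  have hφ_le : ∀ x, φ x ≤ᵐ[s] 1 := fun x => Measure.rnDeriv_le_one_of_le (hqx_le x)
  have hφ_lt_top : ∀ x, ∀ᵐ z ∂s, φ x z < ⊤ := fun x => Measure.rnDeriv_lt_top _ _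
  -- bounded real versions of the densities
  set h : X → Z → ℝ := fun x z => min ((φ x z).toReal) 1 with hh_def
  have hhm : ∀ x, Measurable (h x) := fun x => ((hφm x).ennreal_toReal).min measurable_const
  have hh_bd : ∀ x z, ‖h x z‖ ≤ 1 := by
    intro x z
    rw [Real.norm_eq_abs, abs_of_nonneg (le_min ENNReal.toReal_nonneg zero_le_one)]
    exact min_le_right _ _
  have hh_ae : ∀ x, h x =ᵐ[s] fun z => (φ x z).toReal := by
    intro x
    filter_upwards [hφ_le x] with z hz
    exact min_eq_left ((ENNReal.toReal_mono ENNReal.one_ne_top hz).trans_eq ENNReal.toReal_one)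
  -- the fiber product measure
  set ρ : X → Measure (Y × Z) := fun x => r.withDensity fun w => φ x w.2 with hρ_def
  have hιm : ∀ x : X, Measurable (fun w : Y × Z => (x, w.1, w.2)) := fun x =>
    measurable_const.prodMk measurable_id
  set p : Measure (X × Y × Z) :=
    Measure.sum (fun x => (ρ x).map (fun w : Y × Z => (x, w.1, w.2))) with hp_def
  have hρ_apply : ∀ (x : X) {A : Set (Y × Z)}, MeasurableSet A →
      ρ x A = ∫⁻ w in A, φ x w.2 ∂r := fun x A hA =>
    withDensity_apply _ hA
  have hρ_univ : ∀ x, ρ x univ = qx x univ := by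
    intro x
    rw [hρ_apply x MeasurableSet.univ, Measure.restrict_univ,
      ← lintegral_map (hφm x) measurable_snd, hrsnd, ← Measure.restrict_univ (μ := s),
      hφ_int x univ]
  have hρ_fin : ∀ (x : X) (A : Set (Y × Z)), ρ x A ≠ ⊤ := by
    intro x A
    refine ne_top_of_le_ne_top ?_ (measure_mono (subset_univ A))
    rw [hρ_univ x]
    exact (measure_lt_top _ _).ne
  have hp_rect : ∀ {J : Set X} {K : Set Y} {L : Set Z}, MeasurableSet J → MeasurableSet K →
      MeasurableSet L →
      p (J ×ˢ K ×ˢ L) = ∑ x ∈ Finset.univ.filter (· ∈ J), ρ x (K ×ˢ L) := by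
    intro J K L hJ hK hL
    have hA : MeasurableSet (J ×ˢ K ×ˢ L) := hJ.prod (hK.prod hL)
    rw [hp_def, Measure.sum_apply _ hA, tsum_fintype, Finset.sum_filter]
    refine Finset.sum_congr rfl fun x _ => ?_
    rw [Measure.map_apply (hιm x) hA]
    by_cases hx : x ∈ J
    · rw [if_pos hx]
      congr 1
      ext w
      simp [Set.mem_prod, hx]
    · rw [if_neg hx]
      have : (fun w : Y × Z => (x, w.1, w.2)) ⁻¹' (J ×ˢ K ×ˢ L) = ∅ := by
        ext w; simp [Set.mem_prod, hx]
      rw [this, measure_empty]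
  -- p is a probability measure
  haveI hp_prob : IsProbabilityMeasure p := by
    constructor
    have huniv : (univ : Set (X × Y × Z)) = univ ×ˢ univ ×ˢ univ := by
      rw [Set.univ_prod_univ, Set.univ_prod_univ]
    rw [huniv, hp_rect MeasurableSet.univ MeasurableSet.univ MeasurableSet.univ]
    have h1 : ∀ x : X, ρ x (univ ×ˢ univ : Set (Y × Z)) = q (({x} : Set X) ×ˢ univ) := by
      intro x
      rw [Set.univ_prod_univ, hρ_univ x, hqx x MeasurableSet.univ]
    have hdisj : Pairwise (Function.onFun Disjoint fun x : X => ({x} : Set X) ×ˢ (univ : Set Z)) := by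
      intro i j hij
      simp only [Function.onFun]
      refine Set.disjoint_left.mpr ?_
      rintro ⟨a, b⟩ ⟨ha, -⟩ ⟨ha', -⟩
      exact hij ((Set.eq_of_mem_singleton ha).symm.trans (Set.eq_of_mem_singleton ha'))
    have hcover : ⋃ x : X, ({x} : Set X) ×ˢ (univ : Set Z) = univ := by
      ext ⟨a, b⟩; simp
    have h2 := measure_iUnion (μ := q) hdisj
      (fun x => (MeasurableSet.singleton x).prod MeasurableSet.univ)
    rw [hcover, measure_univ] at h2
    rw [Finset.sum_filter]
    simp only [Set.mem_univ, if_true]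
    calc ∑ x : X, ρ x ((univ : Set Y) ×ˢ (univ : Set Z))
        = ∑ x : X, q (({x} : Set X) ×ˢ (univ : Set Z)) := Finset.sum_congr rfl fun x _ => h1 x
      _ = ∑' x : X, q (({x} : Set X) ×ˢ (univ : Set Z)) := (tsum_fintype _).symm
      _ = 1 := h2.symm
  refine ⟨p, hp_prob, ?_⟩
  intro J K L hJ hK hL f g hf hg
  -- integrability of f and g
  have hfint : Integrable f s := condVersion_integrable q hf
  have hgint : Integrable g s := by
    have := condVersion_integrable r hg
    rwa [hrsnd] at this
  -- decomposition of q (J ×ˢ L)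
  have hdecomp : ∀ {L' : Set Z}, MeasurableSet L' →
      (q (J ×ˢ L')).toReal
        = ∑ x ∈ Finset.univ.filter (· ∈ J), (q (({x} : Set X) ×ˢ L')).toReal := by
    intro L' hL'
    have hJL : J ×ˢ L' = ⋃ x ∈ Finset.univ.filter (· ∈ J), ({x} : Set X) ×ˢ L' := by
      ext ⟨a, b⟩
      simp only [Set.mem_prod, Finset.mem_filter, Finset.mem_univ, true_and, Set.mem_iUnion,
        Set.mem_singleton_iff]
      aesop
    rw [hJL, measure_biUnion_finset ?_ (fun x _ =>
      (MeasurableSet.singleton x).prod hL'), ENNReal.toReal_sum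
      (fun x _ => measure_ne_top q _)]
    intro i _ j _ hij
    refine Set.disjoint_left.mpr ?_
    rintro ⟨a, b⟩ ⟨ha, -⟩ ⟨ha', -⟩
    exact hij ((Set.eq_of_mem_singleton ha).symm.trans (Set.eq_of_mem_singleton ha'))
  -- set-integral of h x
  have hhx_int : ∀ x, Integrable (h x) s := fun x =>
    (integrable_const (1 : ℝ)).mono' (hhm x).aestronglyMeasurable
      (Filter.Eventually.of_forall fun z => by simpa using hh_bd x z)
  have hhx_setInt : ∀ (x : X) {L' : Set Z}, MeasurableSet L' →
      ∫ z in L', h x z ∂s = (q (({x} : Set X) ×ˢ L')).toReal := by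
    intro x L' hL'
    rw [setIntegral_congr_ae hL' (by filter_upwards [hh_ae x] with z hz using fun _ => hz),
      integral_toReal ((hφm x).aemeasurable.restrict)
        (ae_restrict_of_ae (hφ_lt_top x)), hφ_int x L', hqx x hL']
  -- f agrees a.e. with the sum of the h x, x ∈ J
  set F : Z → ℝ := fun z => ∑ x ∈ Finset.univ.filter (· ∈ J), h x z with hF_def
  have hFint : Integrable F s := integrable_finset_sum _ fun x _ => hhx_int x
  have hfF : f =ᵐ[s] F := by
    refine ae_eq_of_forall_setIntegral_eq_of_sigmaFinite
      (fun t ht _ => hfint.integrableOn) (fun t ht _ => hFint.integrableOn) ?_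
    intro t ht _
    rw [hF_def]
    rw [integral_finset_sum _ fun x _ => (hhx_int x).integrableOn]
    have h1 : ∫ z in t, f z ∂s = (q (J ×ˢ t)).toReal := condVersion_setIntegral q hJ hf ht
    rw [h1, hdecomp ht]
    exact Finset.sum_congr rfl fun x _ => (hhx_setInt x ht).symm
  -- each term: ∫ z in L, h x z * g z ∂s = (ρ x (K ×ˢ L)).toReal
  have key : ∀ x : X, ∫ z in L, h x z * g z ∂s = (ρ x (K ×ˢ L)).toReal := by
    intro x
    have h1 := condVersion_setIntegral_mul r hK hg (hhm x) (hh_bd x) hL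
    rw [hrsnd] at h1
    rw [h1]
    have hae_r : (fun w : Y × Z => h x w.2) =ᵐ[r] fun w => (φ x w.2).toReal := by
      have hset : MeasurableSet {z : Z | h x z = (φ x z).toReal} :=
        measurableSet_eq_fun (hhm x) (hφm x).ennreal_toReal
      have h2 : ∀ᵐ z ∂(r.map (Prod.snd : Y × Z → Z)), h x z = (φ x z).toReal := by
        rw [hrsnd]; exact hh_ae x
      exact (ae_map_iff measurable_snd.aemeasurable hset).mp h2
    have hlt_r : ∀ᵐ w ∂r, φ x w.2 < ⊤ := by
      have hset : MeasurableSet {z : Z | φ x z < ⊤} :=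
        (hφm x) measurableSet_Iio
      have h2 : ∀ᵐ z ∂(r.map (Prod.snd : Y × Z → Z)), φ x z < ⊤ := by
        rw [hrsnd]; exact hφ_lt_top x
      exact (ae_map_iff measurable_snd.aemeasurable hset).mp h2
    have ham : AEMeasurable (fun w : Y × Z => φ x w.2) (r.restrict (K ×ˢ L)) :=
      ((hφm x).comp measurable_snd).aemeasurable.restrict
    rw [setIntegral_congr_ae (hK.prod hL) (by filter_upwards [hae_r] with w hw using fun _ => hw),
      integral_toReal ham (ae_restrict_of_ae hlt_r), hρ_apply x (hK.prod hL)]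
  -- conclusion
  calc (p (J ×ˢ K ×ˢ L)).toReal
      = ∑ x ∈ Finset.univ.filter (· ∈ J), (ρ x (K ×ˢ L)).toReal := by
        rw [hp_rect hJ hK hL, ENNReal.toReal_sum fun x _ => hρ_fin x _]
    _ = ∑ x ∈ Finset.univ.filter (· ∈ J), ∫ z in L, h x z * g z ∂s := by
        exact Finset.sum_congr rfl fun x _ => (key x).symm
    _ = ∫ z in L, (∑ x ∈ Finset.univ.filter (· ∈ J), h x z * g z) ∂s := by
        rw [integral_finset_sum _ fun x _ =>
          ((hgint.restrict).bdd_mul (hhm x).aestronglyMeasurable (Filter.Eventually.of_forall (hh_bd x)))]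
    _ = ∫ z in L, F z * g z ∂s := by
        refine setIntegral_congr_ae hL (Filter.Eventually.of_forall fun z _ => ?_)
        rw [hF_def, Finset.sum_mul]
    _ = ∫ z in L, f z * g z ∂s := by
        refine setIntegral_congr_ae hL ?_
        filter_upwards [hfF] with z hz _
        rw [hz]
end

section
/- Let p be an h.v. model, and let p_a, p_b, q_a, q_b, r be the marginals of p on X_a×Y×Λ, X_b×Y×Λ, X_a×Y_a×Λ, X_b×Y_b×Λ, and Y×Λ respectively. Then p satisfies parameter independence if and only if p_a = q_a ⊗_{Y_a×Λ} r and p_b = q_b ⊗_{Y_b×Λ} r (fiber products over Y_a×Λ and Y_b×Λ respectively). -/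
open MeasureTheory Set

section HiddenVariable

/- Outcome spaces `Xa`, `Xb` are finite with the power-set σ-algebra; measurement spaces
`Ya`, `Yb` and the hidden-variable space `Λ` are arbitrary measurable spaces.  A hidden-variable
model is a (probability) measure on `(Xa × Xb) × (Ya × Yb) × Λ`; an empirical model is a
(probability) measure on `(Xa × Xb) × (Ya × Yb)`. -/
variable {Xa Xb Ya Yb : Type*} {Λ : Type*}
  [Fintype Xa] [MeasurableSpace Xa] [DiscreteMeasurableSpace Xa]
  [Fintype Xb] [MeasurableSpace Xb] [DiscreteMeasurableSpace Xb]
  [MeasurableSpace Ya] [MeasurableSpace Yb] [MeasurableSpace Λ]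

/-- The sub-σ-algebra `𝒴 ⊗ ℒ` of events depending on the measurements and the hidden variable. -/
def mYL : MeasurableSpace ((Xa × Xb) × (Ya × Yb) × Λ) :=
  MeasurableSpace.comap (fun ω => ω.2) inferInstance

/-- The sub-σ-algebra `𝒴a ⊗ ℒ` of events depending on Alice's measurement and the hidden
variable. -/
def mYaL : MeasurableSpace ((Xa × Xb) × (Ya × Yb) × Λ) :=
  MeasurableSpace.comap (fun ω => (ω.2.1.1, ω.2.2)) inferInstance

/-- The sub-σ-algebra `𝒴b ⊗ ℒ` of events depending on Bob's measurement and the hidden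
variable. -/
def mYbL : MeasurableSpace ((Xa × Xb) × (Ya × Yb) × Λ) :=
  MeasurableSpace.comap (fun ω => (ω.2.1.2, ω.2.2)) inferInstance

/-- The sub-σ-algebra `𝒴` of events depending on the measurements only. -/
def mY : MeasurableSpace ((Xa × Xb) × (Ya × Yb) × Λ) :=
  MeasurableSpace.comap (fun ω => ω.2.1) inferInstance

/-- **Locality**: `p[x‖𝒴⊗ℒ] = p[x_a‖𝒴a⊗ℒ] ⬝ p[x_b‖𝒴b⊗ℒ]` a.s., for every outcome `x`. -/
def Locality (p : Measure ((Xa × Xb) × (Ya × Yb) × Λ)) : Prop :=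
  ∀ x : Xa × Xb,
    condProb p mYL {ω | ω.1 = x} =ᵐ[p]
      fun ω => condProb p mYaL {ω' | ω'.1.1 = x.1} ω * condProb p mYbL {ω' | ω'.1.2 = x.2} ω

/-- **Parameter independence**: `p[x_a‖𝒴⊗ℒ] = p[x_a‖𝒴a⊗ℒ]` a.s. for every `x_a`, and likewise
with `a` and `b` interchanged. -/
def ParameterIndependence (p : Measure ((Xa × Xb) × (Ya × Yb) × Λ)) : Prop :=
  (∀ xa : Xa, condProb p mYL {ω | ω.1.1 = xa} =ᵐ[p] condProb p mYaL {ω | ω.1.1 = xa}) ∧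
  (∀ xb : Xb, condProb p mYL {ω | ω.1.2 = xb} =ᵐ[p] condProb p mYbL {ω | ω.1.2 = xb})

/-- **Outcome independence**: `p[x‖𝒴⊗ℒ] = p[x_a‖𝒴⊗ℒ] ⬝ p[x_b‖𝒴⊗ℒ]` a.s., for every
outcome `x`. -/
def OutcomeIndependence (p : Measure ((Xa × Xb) × (Ya × Yb) × Λ)) : Prop :=
  ∀ x : Xa × Xb,
    condProb p mYL {ω | ω.1 = x} =ᵐ[p]
      fun ω => condProb p mYL {ω' | ω'.1.1 = x.1} ω * condProb p mYL {ω' | ω'.1.2 = x.2} ω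

/-- **λ-independence**: `p[L‖𝒴] = p(L)` a.s., for every event `L` of the hidden-variable
space. -/
def LambdaIndependence (p : Measure ((Xa × Xb) × (Ya × Yb) × Λ)) : Prop :=
  ∀ L : Set Λ, MeasurableSet L →
    condProb p mY {ω | ω.2.2 ∈ L} =ᵐ[p] fun _ => (p {ω | ω.2.2 ∈ L}).toReal

/-- **Weak determinism**: `p[x‖𝒴⊗ℒ] ∈ {0,1}` a.s., for every outcome `x`. -/
def WeakDeterminism (p : Measure ((Xa × Xb) × (Ya × Yb) × Λ)) : Prop :=
  ∀ x : Xa × Xb, ∀ᵐ ω ∂p, condProb p mYL {ω' | ω'.1 = x} ω ∈ ({0, 1} : Set ℝ)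

/-- **Strong determinism**: `p[x_a‖𝒴a⊗ℒ] ∈ {0,1}` a.s. for every `x_a`, and likewise with `a`
and `b` interchanged. -/
def StrongDeterminism (p : Measure ((Xa × Xb) × (Ya × Yb) × Λ)) : Prop :=
  (∀ xa : Xa, ∀ᵐ ω ∂p, condProb p mYaL {ω' | ω'.1.1 = xa} ω ∈ ({0, 1} : Set ℝ)) ∧
  (∀ xb : Xb, ∀ᵐ ω ∂p, condProb p mYbL {ω' | ω'.1.2 = xb} ω ∈ ({0, 1} : Set ℝ))

end HiddenVariable

section FiberProducts

variable {Xa Xb Ya Yb : Type*} {Λ : Type*}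
  [Fintype Xa] [MeasurableSpace Xa] [DiscreteMeasurableSpace Xa]
  [Fintype Xb] [MeasurableSpace Xb] [DiscreteMeasurableSpace Xb]
  [MeasurableSpace Ya] [MeasurableSpace Yb] [MeasurableSpace Λ]

/-- `p = p_a ⊗_{Y×Λ} p_b`: the h.v. model `p` is the fiber product over `Y × Λ` of its marginals
`p_a` on `Xa × Y × Λ` and `p_b` on `Xb × Y × Λ`, i.e. for all `J ⊆ Xa`, `K ⊆ Xb` and measurable
`M ⊆ Y × Λ`, `p (J × K × M) = ∫_M p_a[J‖𝒴⊗ℒ] ⬝ p_b[K‖𝒴⊗ℒ] dr`, where `r` is the marginal of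
`p` on `Y × Λ` and the integrand uses any measurable versions of the conditional
probabilities. -/
def OutcomeFiber (p : Measure ((Xa × Xb) × (Ya × Yb) × Λ)) : Prop :=
  ∀ (J : Set Xa) (K : Set Xb) (M : Set ((Ya × Yb) × Λ)),
    MeasurableSet J → MeasurableSet K → MeasurableSet M →
    ∀ f g : (Ya × Yb) × Λ → ℝ,
      IsCondVersion (p.map fun ω => (ω.1.1, ω.2))
        (Prod.snd : Xa × ((Ya × Yb) × Λ) → (Ya × Yb) × Λ) {v | v.1 ∈ J} f →
      IsCondVersion (p.map fun ω => (ω.1.2, ω.2))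
        (Prod.snd : Xb × ((Ya × Yb) × Λ) → (Ya × Yb) × Λ) {v | v.1 ∈ K} g →
      (p {ω | ω.1.1 ∈ J ∧ ω.1.2 ∈ K ∧ ω.2 ∈ M}).toReal
        = ∫ w in M, f w * g w ∂(p.map fun ω => ω.2)

/-- `p_a = q_a ⊗_{Ya×Λ} r`: the marginal `p_a` of the h.v. model `p` on `Xa × Y × Λ` is the
fiber product over `Ya × Λ` of the marginals `q_a` (on `Xa × Ya × Λ`) and `r` (on `Y × Λ`),
i.e. for all `J ⊆ Xa`, measurable `K ⊆ Yb` and measurable `L ⊆ Ya × Λ`,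
`p_a (J × K × L) = ∫_L q_a[J‖𝒴a⊗ℒ] ⬝ r[K‖𝒴a⊗ℒ] ds`, where `s` is the marginal of `p` on
`Ya × Λ` and the integrand uses any measurable versions of the conditional probabilities. -/
def ParamFiberA (p : Measure ((Xa × Xb) × (Ya × Yb) × Λ)) : Prop :=
  ∀ (J : Set Xa) (K : Set Yb) (L : Set (Ya × Λ)),
    MeasurableSet J → MeasurableSet K → MeasurableSet L →
    ∀ f g : Ya × Λ → ℝ,
      IsCondVersion (p.map fun ω => (ω.1.1, (ω.2.1.1, ω.2.2)))
        (Prod.snd : Xa × (Ya × Λ) → Ya × Λ) {v | v.1 ∈ J} f →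
      IsCondVersion (p.map fun ω => ω.2)
        (fun w : (Ya × Yb) × Λ => (w.1.1, w.2)) {w | w.1.2 ∈ K} g →
      ((p.map fun ω => (ω.1.1, ω.2))
          {v : Xa × ((Ya × Yb) × Λ) | v.1 ∈ J ∧ v.2.1.2 ∈ K ∧ (v.2.1.1, v.2.2) ∈ L}).toReal
        = ∫ z in L, f z * g z ∂(p.map fun ω => (ω.2.1.1, ω.2.2))

/-- `p_b = q_b ⊗_{Yb×Λ} r`: the statement symmetric to `ParamFiberA`, with the roles of `a`
and `b` interchanged. -/
def ParamFiberB (p : Measure ((Xa × Xb) × (Ya × Yb) × Λ)) : Prop :=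
  ∀ (J : Set Xb) (K : Set Ya) (L : Set (Yb × Λ)),
    MeasurableSet J → MeasurableSet K → MeasurableSet L →
    ∀ f g : Yb × Λ → ℝ,
      IsCondVersion (p.map fun ω => (ω.1.2, (ω.2.1.2, ω.2.2)))
        (Prod.snd : Xb × (Yb × Λ) → Yb × Λ) {v | v.1 ∈ J} f →
      IsCondVersion (p.map fun ω => ω.2)
        (fun w : (Ya × Yb) × Λ => (w.1.2, w.2)) {w | w.1.1 ∈ K} g →
      ((p.map fun ω => (ω.1.2, ω.2))
          {v : Xb × ((Ya × Yb) × Λ) | v.1 ∈ J ∧ v.2.1.1 ∈ K ∧ (v.2.1.2, v.2.2) ∈ L}).toReal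
        = ∫ z in L, f z * g z ∂(p.map fun ω => (ω.2.1.2, ω.2.2))

end FiberProducts

namespace HVAux

variable {α Z : Type*} [MeasurableSpace α] [MeasurableSpace Z]
  {p : Measure α} {π : α → Z} {S : Set α} {f : Z → ℝ}

lemma indicator_integrable (p : Measure α) [IsFiniteMeasure p] {S : Set α}
    (hS : MeasurableSet S) : Integrable (S.indicator fun _ => (1 : ℝ)) p :=
  (integrable_const (1 : ℝ)).indicator hS

lemma setIntegral_indicator_one (p : Measure α) {S t : Set α}
    (hS : MeasurableSet S) :
    ∫ a in t, S.indicator (fun _ => (1 : ℝ)) a ∂p = (p (S ∩ t)).toReal := by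
  rw [integral_indicator hS, setIntegral_const, measureReal_def, Measure.restrict_apply hS,
    smul_eq_mul, mul_one]

lemma icv_integrable [IsFiniteMeasure p] (hS : MeasurableSet S)
    (hv : IsCondVersion p π S f) : Integrable (fun a => f (π a)) p :=
  (integrable_condExp (m := MeasurableSpace.comap π inferInstance)
    (f := S.indicator fun _ => (1 : ℝ))).congr hv.2.symm

lemma icv_setIntegral [IsFiniteMeasure p] (hπ : Measurable π)
    (hS : MeasurableSet S) (hv : IsCondVersion p π S f) {B : Set Z} (hB : MeasurableSet B) :
    ∫ a in π ⁻¹' B, f (π a) ∂p = (p (S ∩ π ⁻¹' B)).toReal := by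
  have hm : MeasurableSpace.comap π inferInstance ≤ ‹MeasurableSpace α› := hπ.comap_le
  have hpre : MeasurableSet[MeasurableSpace.comap π inferInstance] (π ⁻¹' B) := ⟨B, hB, rfl⟩
  calc ∫ a in π ⁻¹' B, f (π a) ∂p
      = ∫ a in π ⁻¹' B, condProb p (MeasurableSpace.comap π inferInstance) S a ∂p :=
        integral_congr_ae (ae_restrict_of_ae hv.2)
    _ = ∫ a in π ⁻¹' B, S.indicator (fun _ => (1 : ℝ)) a ∂p :=
        setIntegral_condExp hm (indicator_integrable p hS) hpre
    _ = (p (S ∩ π ⁻¹' B)).toReal := setIntegral_indicator_one p hS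

lemma isCondVersion_of_setIntegral [IsFiniteMeasure p] (hπ : Measurable π)
    (hS : MeasurableSet S) (hf : Measurable f) (hfi : Integrable (fun a => f (π a)) p)
    (h : ∀ B : Set Z, MeasurableSet B →
      ∫ a in π ⁻¹' B, f (π a) ∂p = (p (S ∩ π ⁻¹' B)).toReal) :
    IsCondVersion p π S f := by
  have hm : MeasurableSpace.comap π inferInstance ≤ ‹MeasurableSpace α› := hπ.comap_le
  refine ⟨hf, ae_eq_condExp_of_forall_setIntegral_eq hm (indicator_integrable p hS)
    (fun s _ _ => hfi.integrableOn) (fun s hs _ => ?_) ?_⟩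
  · obtain ⟨B, hB, rfl⟩ := hs
    rw [h B hB, setIntegral_indicator_one p hS]
  · exact StronglyMeasurable.aestronglyMeasurable (m := MeasurableSpace.comap π inferInstance)
      (hf.comp (comap_measurable π)).stronglyMeasurable

lemma isCondVersion_map_iff {β : Type*} [MeasurableSpace β] {T : α → β} {π : β → Z}
    {S : Set β} (hT : Measurable T) (hπ : Measurable π) (hS : MeasurableSet S)
    [IsFiniteMeasure p] {f : Z → ℝ} (hf : Measurable f) :
    IsCondVersion (p.map T) π S f ↔
      IsCondVersion p (fun a => π (T a)) (T ⁻¹' S) f := by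
  have hmapfin : IsFiniteMeasure (p.map T) := by
    constructor; rw [Measure.map_apply hT .univ]; exact measure_lt_top p _
  have hπT : Measurable fun a => π (T a) := hπ.comp hT
  have hint : Integrable (fun b => f (π b)) (p.map T) ↔ Integrable (fun a => f (π (T a))) p :=
    integrable_map_measure (hf.comp hπ : Measurable fun b => f (π b)).aestronglyMeasurable
      hT.aemeasurable
  have hset : ∀ (B : Set Z), MeasurableSet B →
      ∫ b in π ⁻¹' B, f (π b) ∂(p.map T)
        = ∫ a in (fun a => π (T a)) ⁻¹' B, f (π (T a)) ∂p := by
    intro B hB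
    exact setIntegral_map (g := T) (f := fun b => f (π b)) (hπ hB)
      (hf.comp hπ).aestronglyMeasurable hT.aemeasurable
  have hmeas : ∀ (B : Set Z), MeasurableSet B →
      (p.map T) (S ∩ π ⁻¹' B) = p (T ⁻¹' S ∩ (fun a => π (T a)) ⁻¹' B) := by
    intro B hB
    rw [Measure.map_apply hT (hS.inter (hπ hB)), preimage_inter]
    rfl
  constructor
  · intro hv
    refine isCondVersion_of_setIntegral hπT (hT hS) hf (hint.1 (icv_integrable hS hv)) ?_
    intro B hB
    rw [← hset B hB, icv_setIntegral hπ hS hv hB, hmeas B hB]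
  · intro hv
    refine isCondVersion_of_setIntegral hπ hS hf (hint.2 (icv_integrable (hT hS) hv)) ?_
    intro B hB
    rw [hset B hB, icv_setIntegral hπT (hT hS) hv hB, hmeas B hB]

lemma factor_comap {α Z : Type*} [MeasurableSpace α] [MeasurableSpace Z]
    {π : α → Z} (s : Z → α) (hs : ∀ z, π (s z) = z)
    {F : α → ℝ} (hF : Measurable[MeasurableSpace.comap π inferInstance] F) :
    ∃ f : Z → ℝ, Measurable f ∧ ∀ a, F a = f (π a) := by
  have hsm : @Measurable Z α _ (MeasurableSpace.comap π inferInstance) s := by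
    rintro t ⟨B, hB, rfl⟩
    have : s ⁻¹' (π ⁻¹' B) = B := by ext z; simp [Set.mem_preimage, hs z]
    rw [this]; exact hB
  refine ⟨F ∘ s, hF.comp hsm, fun a => ?_⟩
  obtain ⟨B, hB, hBeq⟩ := hF (measurableSet_singleton (F a))
  have ha : a ∈ π ⁻¹' B := by rw [hBeq]; exact rfl
  have h2 : s (π a) ∈ π ⁻¹' B := by
    simp only [Set.mem_preimage, hs (π a)]; exact ha
  rw [hBeq] at h2
  exact h2.symm

lemma upg {Ω X : Type*} (m1 m2 : MeasurableSpace Ω) {mΩ : MeasurableSpace Ω} [Fintype X]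
    [MeasurableSpace X] [DiscreteMeasurableSpace X]
    (p : Measure Ω) [IsProbabilityMeasure p]
    {ξ : Ω → X} (hξ : @Measurable Ω X mΩ _ ξ)
    (h : ∀ x : X, condExp m2 p ({ω | ξ ω = x}.indicator fun _ => (1:ℝ))
        =ᵐ[p] condExp m1 p ({ω | ξ ω = x}.indicator fun _ => (1:ℝ)))
    (J : Set X) :
    condExp m2 p ({ω | ξ ω ∈ J}.indicator fun _ => (1:ℝ))
      =ᵐ[p] condExp m1 p ({ω | ξ ω ∈ J}.indicator fun _ => (1:ℝ)) := by
  classical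
  have hxmeas : ∀ x : X, MeasurableSet[mΩ] {ω | ξ ω = x} := fun x =>
    hξ (MeasurableSet.of_discrete (s := {x}))
  have hsplit : ({ω | ξ ω ∈ J}.indicator fun _ => (1:ℝ))
      = ∑ x ∈ Finset.univ.filter (· ∈ J), ({ω | ξ ω = x}.indicator fun _ => (1:ℝ)) := by
    funext ω
    simp only [Finset.sum_apply, Set.indicator_apply, Set.mem_setOf_eq]
    rw [Finset.sum_ite_eq]
    simp [Finset.mem_filter]
  have hint : ∀ (x : X), x ∈ Finset.univ.filter (· ∈ J) →
      Integrable ({ω | ξ ω = x}.indicator fun _ => (1:ℝ)) p := fun x _ =>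
    indicator_integrable p (hxmeas x)
  rw [hsplit]
  calc condExp m2 p (∑ x ∈ Finset.univ.filter (· ∈ J), ({ω | ξ ω = x}.indicator fun _ => (1:ℝ)))
      =ᵐ[p] ∑ x ∈ Finset.univ.filter (· ∈ J),
        condExp m2 p ({ω | ξ ω = x}.indicator fun _ => (1:ℝ)) := condExp_finset_sum hint m2
    _ =ᵐ[p] ∑ x ∈ Finset.univ.filter (· ∈ J),
        condExp m1 p ({ω | ξ ω = x}.indicator fun _ => (1:ℝ)) := by
        have hae : ∀ᵐ ω ∂p, ∀ x ∈ Finset.univ.filter (· ∈ J),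
            condExp m2 p ({ω | ξ ω = x}.indicator fun _ => (1:ℝ)) ω
              = condExp m1 p ({ω | ξ ω = x}.indicator fun _ => (1:ℝ)) ω :=
          (ae_ball_iff (Finset.univ.filter (· ∈ J)).countable_toSet).2 fun x _ => h x
        filter_upwards [hae] with ω hω
        simp only [Finset.sum_apply]
        exact Finset.sum_congr rfl hω
    _ =ᵐ[p] condExp m1 p (∑ x ∈ Finset.univ.filter (· ∈ J),
        ({ω | ξ ω = x}.indicator fun _ => (1:ℝ))) := (condExp_finset_sum hint m1).symm

lemma core1 {Ω W Z : Type*} [MeasurableSpace Ω] [MeasurableSpace W] [MeasurableSpace Z]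
    (p : Measure Ω) [IsProbabilityMeasure p]
    {π : Ω → W} (hπ : Measurable π) {σ : W → Z} (hσ : Measurable σ)
    {B' : Set W} (hB' : MeasurableSet B') {L : Set Z} (hL : MeasurableSet L)
    {f g : Z → ℝ} (hf : Measurable f)
    (hfi : Integrable (fun ω => f (σ (π ω))) p)
    (hgv : (fun ω => g (σ (π ω))) =ᵐ[p]
      condExp (MeasurableSpace.comap (fun ω => σ (π ω)) inferInstance) p
        ((π ⁻¹' B').indicator fun _ => (1:ℝ))) :
    ∫ ω in (fun ω => σ (π ω)) ⁻¹' L, f (σ (π ω)) * g (σ (π ω)) ∂p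
      = ∫ ω in ((fun ω => σ (π ω)) ⁻¹' L) ∩ π ⁻¹' B', f (σ (π ω)) ∂p := by
  set ρ : Ω → Z := fun ω => σ (π ω) with hρdef
  have hρ : Measurable ρ := hσ.comp hπ
  have hm : MeasurableSpace.comap ρ inferInstance ≤ ‹MeasurableSpace Ω› := hρ.comap_le
  set φ : Ω → ℝ := (ρ ⁻¹' L).indicator (fun ω => f (ρ ω)) with hφdef
  set ψ : Ω → ℝ := (π ⁻¹' B').indicator (fun _ => (1:ℝ)) with hψdef
  have hLpre : MeasurableSet[MeasurableSpace.comap ρ inferInstance] (ρ ⁻¹' L) := ⟨L, hL, rfl⟩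
  have hφm : StronglyMeasurable[MeasurableSpace.comap ρ inferInstance] φ :=
    ((hf.comp (comap_measurable ρ)).indicator hLpre).stronglyMeasurable
  have hψint : Integrable ψ p := indicator_integrable p (hπ hB')
  have hφψ_eq : φ * ψ = (π ⁻¹' B').indicator φ := by
    funext ω
    by_cases hω : ω ∈ π ⁻¹' B' <;>
      simp [hφdef, hψdef, Set.indicator_apply, hω]
  have hφψint : Integrable (φ * ψ) p := by
    rw [hφψ_eq]
    exact (hfi.indicator (hρ hL)).indicator (hπ hB')
  have hpull := condExp_mul_of_stronglyMeasurable_left hφm hφψint hψint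
  calc ∫ ω in ρ ⁻¹' L, f (ρ ω) * g (ρ ω) ∂p
      = ∫ ω, φ ω * g (ρ ω) ∂p := by
        rw [← integral_indicator (hρ hL)]
        congr 1
        funext ω
        by_cases hω : ω ∈ ρ ⁻¹' L <;> simp [hφdef, Set.indicator_apply, hω]
    _ = ∫ ω, φ ω * condExp (MeasurableSpace.comap ρ inferInstance) p ψ ω ∂p := by
        refine integral_congr_ae (hgv.mono fun ω h => ?_)
        dsimp only at h ⊢
        rw [h]
    _ = ∫ ω, condExp (MeasurableSpace.comap ρ inferInstance) p (φ * ψ) ω ∂p := by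
        refine integral_congr_ae (hpull.mono fun ω h => ?_)
        rw [h, Pi.mul_apply]
    _ = ∫ ω, (φ * ψ) ω ∂p := integral_condExp hm
    _ = ∫ ω in π ⁻¹' B', φ ω ∂p := by rw [hφψ_eq]; exact integral_indicator (hπ hB')
    _ = ∫ ω in (ρ ⁻¹' L) ∩ π ⁻¹' B', f (ρ ω) ∂p := by
        rw [hφdef]
        rw [integral_indicator (hρ hL), Measure.restrict_restrict (hρ hL)]

lemma core2 {Ω W Z : Type*} [MeasurableSpace Ω] [MeasurableSpace W] [MeasurableSpace Z]
    (p : Measure Ω) [IsProbabilityMeasure p]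
    {π : Ω → W} (hπ : Measurable π) {σ : W → Z} (hσ : Measurable σ)
    {A : Set Ω} (hA : MeasurableSet A)
    {B' : Set W} (hB' : MeasurableSet B') {L : Set Z} (hL : MeasurableSet L)
    {f : Z → ℝ}
    (hfv : (fun ω => f (σ (π ω))) =ᵐ[p]
      condExp (MeasurableSpace.comap π inferInstance) p (A.indicator fun _ => (1:ℝ))) :
    ∫ ω in ((fun ω => σ (π ω)) ⁻¹' L) ∩ π ⁻¹' B', f (σ (π ω)) ∂p
      = (p (A ∩ (((fun ω => σ (π ω)) ⁻¹' L) ∩ π ⁻¹' B'))).toReal := by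
  have hmle : MeasurableSpace.comap π inferInstance ≤ ‹MeasurableSpace Ω› := hπ.comap_le
  have hsm : MeasurableSet[MeasurableSpace.comap π inferInstance]
      (((fun ω => σ (π ω)) ⁻¹' L) ∩ π ⁻¹' B') :=
    ⟨σ ⁻¹' L ∩ B', (hσ hL).inter hB', rfl⟩
  calc ∫ ω in ((fun ω => σ (π ω)) ⁻¹' L) ∩ π ⁻¹' B', f (σ (π ω)) ∂p
      = ∫ ω in ((fun ω => σ (π ω)) ⁻¹' L) ∩ π ⁻¹' B',
          condExp (MeasurableSpace.comap π inferInstance) p (A.indicator fun _ => (1:ℝ)) ω ∂p :=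
        integral_congr_ae (ae_restrict_of_ae hfv)
    _ = ∫ ω in ((fun ω => σ (π ω)) ⁻¹' L) ∩ π ⁻¹' B', A.indicator (fun _ => (1:ℝ)) ω ∂p :=
        setIntegral_condExp hmle (indicator_integrable p hA) hsm
    _ = (p (A ∩ (((fun ω => σ (π ω)) ⁻¹' L) ∩ π ⁻¹' B'))).toReal :=
        setIntegral_indicator_one p hA

lemma ext_lemma {Ω W : Type*} [MeasurableSpace Ω] [mW : MeasurableSpace W]
    (p : Measure Ω) [IsProbabilityMeasure p] {π : Ω → W} (hπ : Measurable π)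
    {C : Set (Set W)} (hgen : mW = MeasurableSpace.generateFrom C) (hPi : IsPiSystem C)
    (huniv : univ ∈ C) {A : Set Ω} (hA : MeasurableSet A)
    {F : W → ℝ} (hF : Measurable F) (hFi : Integrable (fun ω => F (π ω)) p)
    (hnn : 0 ≤ᵐ[p] fun ω => F (π ω))
    (hrect : ∀ M ∈ C, ∫ ω in π ⁻¹' M, F (π ω) ∂p = (p (A ∩ π ⁻¹' M)).toReal) :
    ∀ M : Set W, MeasurableSet M → ∫ ω in π ⁻¹' M, F (π ω) ∂p = (p (A ∩ π ⁻¹' M)).toReal := by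
  set μ1 : Measure W := (p.withDensity fun ω => ENNReal.ofReal (F (π ω))).map π with hμ1
  set μ2 : Measure W := (p.restrict A).map π with hμ2
  have hFπ : Measurable fun ω => F (π ω) := hF.comp hπ
  have h1 : ∀ M : Set W, MeasurableSet M →
      μ1 M = ENNReal.ofReal (∫ ω in π ⁻¹' M, F (π ω) ∂p) := by
    intro M hM
    rw [hμ1, Measure.map_apply hπ hM, withDensity_apply _ (hπ hM),
      ← ofReal_integral_eq_lintegral_ofReal hFi.integrableOn (ae_restrict_of_ae hnn)]
  have h2 : ∀ M : Set W, MeasurableSet M → μ2 M = p (A ∩ π ⁻¹' M) := by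
    intro M hM
    rw [hμ2, Measure.map_apply hπ hM, Measure.restrict_apply (hπ hM), Set.inter_comm]
  have hC : ∀ M ∈ C, μ1 M = μ2 M := by
    intro M hM
    have hMm : MeasurableSet M := hgen ▸ MeasurableSpace.measurableSet_generateFrom hM
    rw [h1 M hMm, h2 M hMm, hrect M hM, ENNReal.ofReal_toReal (measure_ne_top p _)]
  have hμ1fin : IsFiniteMeasure μ1 := by
    constructor
    rw [hC univ huniv, h2 univ MeasurableSet.univ]
    exact measure_lt_top p _
  have heq : μ1 = μ2 := ext_of_generate_finite C hgen hPi hC (hC univ huniv)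
  intro M hM
  have h3 : μ1 M = μ2 M := by rw [heq]
  rw [h1 M hM, h2 M hM] at h3
  have hnn2 : 0 ≤ ∫ ω in π ⁻¹' M, F (π ω) ∂p :=
    integral_nonneg_of_ae (ae_restrict_of_ae hnn)
  rw [← h3, ENNReal.toReal_ofReal hnn2]

section Side

variable {Ω X V W Z : Type*} [MeasurableSpace Ω] [Fintype X] [MeasurableSpace X]
  [DiscreteMeasurableSpace X] [MeasurableSpace V] [MeasurableSpace W] [MeasurableSpace Z]
  (p : Measure Ω) [IsProbabilityMeasure p]

lemma side_forward {ξ : Ω → X} (hξ : Measurable ξ) {π : Ω → W} (hπ : Measurable π)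
    {σ : W → Z} (hσ : Measurable σ) {b : W → V} (hb : Measurable b)
    (hPI : ∀ x : X, condExp (MeasurableSpace.comap π inferInstance) p
        ({ω | ξ ω = x}.indicator fun _ => (1:ℝ))
      =ᵐ[p] condExp (MeasurableSpace.comap (fun ω => σ (π ω)) inferInstance) p
        ({ω | ξ ω = x}.indicator fun _ => (1:ℝ)))
    (J : Set X) (K : Set V) (L : Set Z)
    (hJ : MeasurableSet J) (hK : MeasurableSet K) (hL : MeasurableSet L)
    (f g : Z → ℝ)
    (hf : IsCondVersion (p.map fun ω => (ξ ω, σ (π ω))) Prod.snd {v | v.1 ∈ J} f)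
    (hg : IsCondVersion (p.map π) (fun w => σ w) {w | b w ∈ K} g) :
    ((p.map fun ω => (ξ ω, π ω))
        {v : X × W | v.1 ∈ J ∧ b v.2 ∈ K ∧ σ v.2 ∈ L}).toReal
      = ∫ z in L, f z * g z ∂(p.map fun ω => σ (π ω)) := by
  have hρ : Measurable fun ω => σ (π ω) := hσ.comp hπ
  have hSJ : MeasurableSet {v : X × Z | v.1 ∈ J} := measurable_fst hJ
  have hf' : IsCondVersion p (fun ω => σ (π ω)) {ω | ξ ω ∈ J} f :=
    (isCondVersion_map_iff (hξ.prodMk hρ) measurable_snd hSJ hf.1).1 hf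
  have hg' : IsCondVersion p (fun ω => σ (π ω)) {ω | b (π ω) ∈ K} g :=
    (isCondVersion_map_iff hπ hσ (hb hK) hg.1).1 hg
  have hPI' := upg (MeasurableSpace.comap (fun ω => σ (π ω)) inferInstance)
    (MeasurableSpace.comap π inferInstance) p hξ hPI J
  have hfπ : (fun ω => f (σ (π ω))) =ᵐ[p]
      condExp (MeasurableSpace.comap π inferInstance) p
        ({ω | ξ ω ∈ J}.indicator fun _ => (1:ℝ)) :=
    hf'.2.trans hPI'.symm
  have hfi : Integrable (fun ω => f (σ (π ω))) p :=
    icv_integrable (hξ (MeasurableSet.of_discrete (s := J))) hf'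
  have hA : MeasurableSet {ω | ξ ω ∈ J} := hξ hJ
  have hTm : Measurable fun ω => (ξ ω, π ω) := hξ.prodMk hπ
  have hsetW : MeasurableSet {v : X × W | v.1 ∈ J ∧ b v.2 ∈ K ∧ σ v.2 ∈ L} := by
    have : {v : X × W | v.1 ∈ J ∧ b v.2 ∈ K ∧ σ v.2 ∈ L}
        = (Prod.fst ⁻¹' J) ∩ ((fun v : X × W => b v.2) ⁻¹' K ∩ (fun v : X × W => σ v.2) ⁻¹' L) :=
      rfl
    rw [this]
    exact (measurable_fst hJ).inter
      (((hb.comp measurable_snd) hK).inter ((hσ.comp measurable_snd) hL))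
  rw [Measure.map_apply hTm hsetW]
  have hsets : (fun ω => (ξ ω, π ω)) ⁻¹' {v : X × W | v.1 ∈ J ∧ b v.2 ∈ K ∧ σ v.2 ∈ L}
      = {ω | ξ ω ∈ J} ∩ (((fun ω => σ (π ω)) ⁻¹' L) ∩ π ⁻¹' (b ⁻¹' K)) := by
    ext ω; simp only [Set.mem_preimage, Set.mem_setOf_eq, Set.mem_inter_iff]; tauto
  rw [hsets]
  calc (p ({ω | ξ ω ∈ J} ∩ (((fun ω => σ (π ω)) ⁻¹' L) ∩ π ⁻¹' (b ⁻¹' K)))).toReal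
      = ∫ ω in ((fun ω => σ (π ω)) ⁻¹' L) ∩ π ⁻¹' (b ⁻¹' K), f (σ (π ω)) ∂p :=
        (core2 p hπ hσ hA (hb hK) hL hfπ).symm
    _ = ∫ ω in (fun ω => σ (π ω)) ⁻¹' L, f (σ (π ω)) * g (σ (π ω)) ∂p :=
        (core1 p hπ hσ (hb hK) hL hf.1 hfi hg'.2).symm
    _ = ∫ z in L, f z * g z ∂(p.map fun ω => σ (π ω)) :=
        (setIntegral_map hL (hf.1.mul hg.1).aestronglyMeasurable hρ.aemeasurable).symm

lemma side_reverse {ξ : Ω → X} (hξ : Measurable ξ) {π : Ω → W} (hπ : Measurable π)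
    {σ : W → Z} (hσ : Measurable σ) {b : W → V} (hb : Measurable b)
    (x₀ : X) (sσ : Z → W) (hsσ : ∀ z, σ (sσ z) = z)
    {C : Set (Set W)} (hgen : ‹MeasurableSpace W› = MeasurableSpace.generateFrom C)
    (hPi : IsPiSystem C) (huniv : univ ∈ C)
    (hCrep : ∀ M ∈ C, ∃ (L : Set Z) (K : Set V), MeasurableSet L ∧ MeasurableSet K ∧
        M = σ ⁻¹' L ∩ b ⁻¹' K)
    (hFib : ∀ (J : Set X) (K : Set V) (L : Set Z), MeasurableSet J → MeasurableSet K →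
      MeasurableSet L → ∀ f g : Z → ℝ,
      IsCondVersion (p.map fun ω => (ξ ω, σ (π ω))) Prod.snd {v | v.1 ∈ J} f →
      IsCondVersion (p.map π) (fun w => σ w) {w | b w ∈ K} g →
      ((p.map fun ω => (ξ ω, π ω)) {v : X × W | v.1 ∈ J ∧ b v.2 ∈ K ∧ σ v.2 ∈ L}).toReal
        = ∫ z in L, f z * g z ∂(p.map fun ω => σ (π ω)))
    (x : X) :
    condExp (MeasurableSpace.comap π inferInstance) p
        ({ω | ξ ω = x}.indicator fun _ => (1:ℝ))
      =ᵐ[p] condExp (MeasurableSpace.comap (fun ω => σ (π ω)) inferInstance) p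
        ({ω | ξ ω = x}.indicator fun _ => (1:ℝ)) := by
  classical
  have hρ : Measurable fun ω => σ (π ω) := hσ.comp hπ
  set J : Set X := {x} with hJdef
  have hJ : MeasurableSet J := MeasurableSet.of_discrete
  have hA : MeasurableSet {ω | ξ ω ∈ J} := hξ hJ
  have hSJ : MeasurableSet {v : X × Z | v.1 ∈ J} := measurable_fst hJ
  -- build the version f for q = p.map (ξ, ρ)
  haveI : IsProbabilityMeasure (p.map fun ω => (ξ ω, σ (π ω))) :=
    Measure.isProbabilityMeasure_map (hξ.prodMk hρ).aemeasurable
  haveI : IsProbabilityMeasure (p.map π) := Measure.isProbabilityMeasure_map hπ.aemeasurable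
  obtain ⟨f, hfm, hfeq⟩ := factor_comap (π := (Prod.snd : X × Z → Z)) (fun z => (x₀, z))
    (fun z => rfl)
    (stronglyMeasurable_condExp (μ := p.map fun ω => (ξ ω, σ (π ω)))
      (f := ({v : X × Z | v.1 ∈ J}.indicator fun _ => (1:ℝ)))).measurable
  have hfv : IsCondVersion (p.map fun ω => (ξ ω, σ (π ω))) Prod.snd {v | v.1 ∈ J} f :=
    ⟨hfm, Filter.Eventually.of_forall fun v => (hfeq v).symm⟩
  have hf' : IsCondVersion p (fun ω => σ (π ω)) {ω | ξ ω ∈ J} f :=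
    (isCondVersion_map_iff (hξ.prodMk hρ) measurable_snd hSJ hfm).1 hfv
  have hfi : Integrable (fun ω => f (σ (π ω))) p := icv_integrable hA hf'
  have hnn : 0 ≤ᵐ[p] fun ω => f (σ (π ω)) := by
    have h0 : 0 ≤ᵐ[p] condExp (MeasurableSpace.comap (fun ω => σ (π ω)) inferInstance) p
        ({ω | ξ ω ∈ J}.indicator fun _ => (1:ℝ)) :=
      condExp_nonneg (Filter.Eventually.of_forall fun ω =>
        Set.indicator_nonneg (fun _ _ => zero_le_one) ω)
    filter_upwards [hf'.2, h0] with ω h1 h2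
    rw [show f (σ (π ω)) = _ from h1]
    exact h2
  have hTm : Measurable fun ω => (ξ ω, π ω) := hξ.prodMk hπ
  -- rectangle property
  have hrect : ∀ M ∈ C, ∫ ω in π ⁻¹' M, f (σ (π ω)) ∂p
      = (p ({ω | ξ ω ∈ J} ∩ π ⁻¹' M)).toReal := by
    intro M hM
    obtain ⟨L, K, hL, hK, rfl⟩ := hCrep M hM
    obtain ⟨g, hgm, hgeq⟩ := factor_comap (π := fun w : W => σ w) sσ hsσ
      (stronglyMeasurable_condExp (μ := p.map π)
        (f := ({w : W | b w ∈ K}.indicator fun _ => (1:ℝ)))).measurable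
    have hgv : IsCondVersion (p.map π) (fun w => σ w) {w | b w ∈ K} g :=
      ⟨hgm, Filter.Eventually.of_forall fun w => (hgeq w).symm⟩
    have hg' : IsCondVersion p (fun ω => σ (π ω)) {ω | b (π ω) ∈ K} g :=
      (isCondVersion_map_iff hπ hσ (hb hK) hgm).1 hgv
    have hFibEq := hFib J K L hJ hK hL f g hfv hgv
    have hsetW : MeasurableSet {v : X × W | v.1 ∈ J ∧ b v.2 ∈ K ∧ σ v.2 ∈ L} := by
      have : {v : X × W | v.1 ∈ J ∧ b v.2 ∈ K ∧ σ v.2 ∈ L}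
          = (Prod.fst ⁻¹' J) ∩ ((fun v : X × W => b v.2) ⁻¹' K ∩ (fun v : X × W => σ v.2) ⁻¹' L) :=
        rfl
      rw [this]
      exact (measurable_fst hJ).inter
        (((hb.comp measurable_snd) hK).inter ((hσ.comp measurable_snd) hL))
    rw [Measure.map_apply hTm hsetW] at hFibEq
    have hsets : (fun ω => (ξ ω, π ω)) ⁻¹' {v : X × W | v.1 ∈ J ∧ b v.2 ∈ K ∧ σ v.2 ∈ L}
        = {ω | ξ ω ∈ J} ∩ π ⁻¹' (σ ⁻¹' L ∩ b ⁻¹' K) := by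
      ext ω
      simp only [Set.mem_preimage, Set.mem_setOf_eq, Set.mem_inter_iff]
      tauto
    rw [hsets] at hFibEq
    have hpre : π ⁻¹' (σ ⁻¹' L ∩ b ⁻¹' K)
        = ((fun ω => σ (π ω)) ⁻¹' L) ∩ π ⁻¹' (b ⁻¹' K) := rfl
    rw [hpre]
    calc ∫ ω in ((fun ω => σ (π ω)) ⁻¹' L) ∩ π ⁻¹' (b ⁻¹' K), f (σ (π ω)) ∂p
        = ∫ ω in (fun ω => σ (π ω)) ⁻¹' L, f (σ (π ω)) * g (σ (π ω)) ∂p :=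
          (core1 p hπ hσ (hb hK) hL hfm hfi hg'.2).symm
      _ = ∫ z in L, f z * g z ∂(p.map fun ω => σ (π ω)) :=
          (setIntegral_map hL (hfm.mul hgm).aestronglyMeasurable hρ.aemeasurable).symm
      _ = (p ({ω | ξ ω ∈ J} ∩ (((fun ω => σ (π ω)) ⁻¹' L) ∩ π ⁻¹' (b ⁻¹' K)))).toReal :=
          hFibEq.symm
  have hall := ext_lemma p hπ hgen hPi huniv hA (hfm.comp hσ) hfi hnn hrect
  have hver : IsCondVersion p π {ω | ξ ω ∈ J} (fun w => f (σ w)) :=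
    isCondVersion_of_setIntegral hπ hA (hfm.comp hσ) hfi hall
  exact hver.2.symm.trans hf'.2

end Side

lemma piC {W Z V : Type*} [MeasurableSpace W] [MeasurableSpace Z] [MeasurableSpace V]
    (σ : W → Z) (b : W → V) :
    IsPiSystem {M | ∃ (L : Set Z) (K : Set V), MeasurableSet L ∧ MeasurableSet K ∧
      M = σ ⁻¹' L ∩ b ⁻¹' K} := by
  rintro M1 ⟨L1, K1, hL1, hK1, rfl⟩ M2 ⟨L2, K2, hL2, hK2, rfl⟩ -
  refine ⟨L1 ∩ L2, K1 ∩ K2, hL1.inter hL2, hK1.inter hK2, ?_⟩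
  ext w
  simp only [Set.mem_inter_iff, Set.mem_preimage]
  tauto

lemma univC {W Z V : Type*} [MeasurableSpace W] [MeasurableSpace Z] [MeasurableSpace V]
    (σ : W → Z) (b : W → V) :
    (univ : Set W) ∈ {M | ∃ (L : Set Z) (K : Set V), MeasurableSet L ∧ MeasurableSet K ∧
      M = σ ⁻¹' L ∩ b ⁻¹' K} :=
  ⟨univ, univ, MeasurableSet.univ, MeasurableSet.univ, by simp⟩

lemma genA {Y1 Y2 Λ' : Type*} [MeasurableSpace Y1] [MeasurableSpace Y2] [MeasurableSpace Λ'] :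
    (inferInstance : MeasurableSpace ((Y1 × Y2) × Λ')) = MeasurableSpace.generateFrom
      {M | ∃ (L : Set (Y1 × Λ')) (K : Set Y2), MeasurableSet L ∧ MeasurableSet K ∧
        M = (fun w : (Y1 × Y2) × Λ' => (w.1.1, w.2)) ⁻¹' L ∩ (fun w => w.1.2) ⁻¹' K} := by
  have h3 : MeasurableSpace.generateFrom (image2 (· ×ˢ ·)
        (image2 (· ×ˢ ·) {s : Set Y1 | MeasurableSet s} {t : Set Y2 | MeasurableSet t})
        {u : Set Λ' | MeasurableSet u}) = Prod.instMeasurableSpace :=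
    generateFrom_eq_prod generateFrom_prod MeasurableSpace.generateFrom_measurableSet
      (isCountablySpanning_measurableSet.prod isCountablySpanning_measurableSet)
      isCountablySpanning_measurableSet
  apply le_antisymm
  · rw [show (inferInstance : MeasurableSpace ((Y1 × Y2) × Λ')) = _ from h3.symm]
    apply MeasurableSpace.generateFrom_mono
    rintro _ ⟨_, ⟨Ka, hKa, Kb, hKb, rfl⟩, ΛL, hΛL, rfl⟩
    refine ⟨Ka ×ˢ ΛL, Kb, hKa.prod hΛL, hKb, ?_⟩
    ext w
    simp only [Set.mem_prod, Set.mem_inter_iff, Set.mem_preimage]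
    tauto
  · apply MeasurableSpace.generateFrom_le
    rintro _ ⟨L, K, hL, hK, rfl⟩
    exact (((measurable_fst.comp measurable_fst).prodMk measurable_snd) hL).inter
      ((measurable_snd.comp measurable_fst) hK)

lemma genB {Y1 Y2 Λ' : Type*} [MeasurableSpace Y1] [MeasurableSpace Y2] [MeasurableSpace Λ'] :
    (inferInstance : MeasurableSpace ((Y1 × Y2) × Λ')) = MeasurableSpace.generateFrom
      {M | ∃ (L : Set (Y2 × Λ')) (K : Set Y1), MeasurableSet L ∧ MeasurableSet K ∧
        M = (fun w : (Y1 × Y2) × Λ' => (w.1.2, w.2)) ⁻¹' L ∩ (fun w => w.1.1) ⁻¹' K} := by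
  have h3 : MeasurableSpace.generateFrom (image2 (· ×ˢ ·)
        (image2 (· ×ˢ ·) {s : Set Y1 | MeasurableSet s} {t : Set Y2 | MeasurableSet t})
        {u : Set Λ' | MeasurableSet u}) = Prod.instMeasurableSpace :=
    generateFrom_eq_prod generateFrom_prod MeasurableSpace.generateFrom_measurableSet
      (isCountablySpanning_measurableSet.prod isCountablySpanning_measurableSet)
      isCountablySpanning_measurableSet
  apply le_antisymm
  · rw [show (inferInstance : MeasurableSpace ((Y1 × Y2) × Λ')) = _ from h3.symm]
    apply MeasurableSpace.generateFrom_mono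
    rintro _ ⟨_, ⟨Ka, hKa, Kb, hKb, rfl⟩, ΛL, hΛL, rfl⟩
    refine ⟨Kb ×ˢ ΛL, Ka, hKb.prod hΛL, hKa, ?_⟩
    ext w
    simp only [Set.mem_prod, Set.mem_inter_iff, Set.mem_preimage]
    tauto
  · apply MeasurableSpace.generateFrom_le
    rintro _ ⟨L, K, hL, hK, rfl⟩
    exact (((measurable_snd.comp measurable_fst).prodMk measurable_snd) hL).inter
      ((measurable_fst.comp measurable_fst) hK)

end HVAux

/-- **Corollary.**  An h.v. model `p` satisfies parameter independence if and only if
`p_a = q_a ⊗_{Ya×Λ} r` and `p_b = q_b ⊗_{Yb×Λ} r`, where `p_a, p_b, q_a, q_b, r` are the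
marginals of `p` on `Xa × Y × Λ`, `Xb × Y × Λ`, `Xa × Ya × Λ`, `Xb × Yb × Λ`, `Y × Λ`. -/
theorem parameterIndependence_iff_fiberProducts
    {Xa Xb Ya Yb Λ : Type*}
    [Fintype Xa] [MeasurableSpace Xa] [DiscreteMeasurableSpace Xa]
    [Fintype Xb] [MeasurableSpace Xb] [DiscreteMeasurableSpace Xb]
    [MeasurableSpace Ya] [MeasurableSpace Yb] [MeasurableSpace Λ]
    (p : Measure ((Xa × Xb) × (Ya × Yb) × Λ)) [IsProbabilityMeasure p] :
    ParameterIndependence p ↔ ParamFiberA p ∧ ParamFiberB p := by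
  have hξa : Measurable fun ω : (Xa × Xb) × (Ya × Yb) × Λ => ω.1.1 :=
    measurable_fst.comp measurable_fst
  have hξb : Measurable fun ω : (Xa × Xb) × (Ya × Yb) × Λ => ω.1.2 :=
    measurable_snd.comp measurable_fst
  have hπ : Measurable fun ω : (Xa × Xb) × (Ya × Yb) × Λ => ω.2 := measurable_snd
  have hσa : Measurable fun w : (Ya × Yb) × Λ => (w.1.1, w.2) :=
    (measurable_fst.comp measurable_fst).prodMk measurable_snd
  have hσb : Measurable fun w : (Ya × Yb) × Λ => (w.1.2, w.2) :=
    (measurable_snd.comp measurable_fst).prodMk measurable_snd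
  have hba : Measurable fun w : (Ya × Yb) × Λ => w.1.2 := measurable_snd.comp measurable_fst
  have hbb : Measurable fun w : (Ya × Yb) × Λ => w.1.1 := measurable_fst.comp measurable_fst
  constructor
  · rintro ⟨hPIa, hPIb⟩
    refine ⟨?_, ?_⟩
    · intro J K L hJ hK hL f g hf hg
      exact HVAux.side_forward p hξa hπ hσa hba hPIa J K L hJ hK hL f g hf hg
    · intro J K L hJ hK hL f g hf hg
      exact HVAux.side_forward p hξb hπ hσb hbb hPIb J K L hJ hK hL f g hf hg
  · rintro ⟨hFa, hFb⟩
    have hne : Nonempty ((Xa × Xb) × (Ya × Yb) × Λ) := by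
      by_contra h
      rw [not_nonempty_iff] at h
      have h1 := measure_univ (μ := p)
      rw [Set.univ_eq_empty_iff.2 h, measure_empty] at h1
      exact zero_ne_one h1
    obtain ⟨⟨⟨xa0, xb0⟩, ⟨ya0, yb0⟩, l0⟩⟩ := hne
    refine ⟨?_, ?_⟩
    · intro xa
      exact HVAux.side_reverse p hξa hπ hσa hba xa0
        (fun z => ((z.1, yb0), z.2)) (fun z => rfl)
        HVAux.genA (HVAux.piC _ _) (HVAux.univC _ _) (fun M hM => hM)
        (fun J K L hJ hK hL f g hf hg => hFa J K L hJ hK hL f g hf hg) xa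
    · intro xb
      exact HVAux.side_reverse p hξb hπ hσb hbb xb0
        (fun z => ((ya0, z.1), z.2)) (fun z => rfl)
        HVAux.genB (HVAux.piC _ _) (HVAux.univC _ _) (fun M hM => hM)
        (fun J K L hJ hK hL f g hf hg => hFb J K L hJ hK hL f g hf hg) xb
end

section
/- Let p be an h.v. model, and let p_a, p_b be the marginals of p on X_a×Y×Λ and X_b×Y×Λ respectively. Then p satisfies outcome independence if and only if p = p_a ⊗_{Y×Λ} p_b (the fiber product of p_a and p_b over Y×Λ). -/
open MeasureTheory Set

section Aux

variable {Ω α β : Type*} [MeasurableSpace Ω] [MeasurableSpace α] [MeasurableSpace β]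

/-- Factorization of a `comap snd`-measurable real function through `snd`. -/
lemma exists_factor_snd [Nonempty α] {f : α × β → ℝ}
    (hf : Measurable[MeasurableSpace.comap Prod.snd inferInstance] f) :
    ∃ φ : β → ℝ, Measurable φ ∧ ∀ v, f v = φ v.2 := by
  obtain ⟨a0⟩ := ‹Nonempty α›
  have key : ∀ a b, f (a, b) = f (a0, b) := by
    intro a b
    obtain ⟨t, -, hts⟩ := hf (measurableSet_singleton (f (a, b)))
    have hb : b ∈ t := by
      have : (a, b) ∈ Prod.snd ⁻¹' t := by rw [hts]; exact rfl
      exact this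
    have : (a0, b) ∈ Prod.snd ⁻¹' t := hb
    rw [hts] at this
    exact this.symm
  refine ⟨fun b => f (a0, b), ?_, fun v => key v.1 v.2⟩
  intro s hs
  obtain ⟨t, ht, hts⟩ := hf hs
  have : (fun b => f (a0, b)) ⁻¹' s = t := by
    ext b
    constructor
    · intro hbs
      have : (a0, b) ∈ f ⁻¹' s := hbs
      rw [← hts] at this; exact this
    · intro hbt
      have : (a0, b) ∈ Prod.snd ⁻¹' t := hbt
      rw [hts] at this; exact this
  rw [this]; exact ht

variable {p : Measure Ω} [IsProbabilityMeasure p] {T : Ω → β} {U : Ω → α}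
  {J : Set α} {f : β → ℝ}

/-- Transfer of a conditional-probability version from the mapped measure to `p`. -/
lemma transfer_version (hT : Measurable T) (hU : Measurable U) (hJ : MeasurableSet J)
    (hfm : Measurable f)
    (hver : (fun v : α × β => f v.2) =ᵐ[p.map fun ω => (U ω, T ω)]
      condProb (p.map fun ω => (U ω, T ω))
        (MeasurableSpace.comap Prod.snd inferInstance) {v | v.1 ∈ J}) :
    (fun ω => f (T ω)) =ᵐ[p]
      condProb p (MeasurableSpace.comap T inferInstance) {ω | U ω ∈ J} := by
  set φ : Ω → α × β := fun ω => (U ω, T ω) with hφ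
  have hφm : Measurable φ := hU.prodMk hT
  set q : Measure (α × β) := p.map φ with hq
  haveI : IsProbabilityMeasure q := Measure.isProbabilityMeasure_map hφm.aemeasurable
  have hm : MeasurableSpace.comap T inferInstance ≤ (inferInstance : MeasurableSpace Ω) :=
    measurable_iff_comap_le.mp hT
  have hm' : MeasurableSpace.comap (Prod.snd : α × β → β) inferInstance ≤
      (inferInstance : MeasurableSpace (α × β)) := measurable_iff_comap_le.mp measurable_snd
  have hSmeas : MeasurableSet {v : α × β | v.1 ∈ J} := measurable_fst hJ
  have hUJ : MeasurableSet {ω | U ω ∈ J} := hU hJ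
  have hsm : Measurable fun v : α × β => f v.2 := hfm.comp measurable_snd
  have hind : Integrable ({v : α × β | v.1 ∈ J}.indicator fun _ => (1 : ℝ)) q :=
    (integrable_const 1).indicator hSmeas
  have hfq : Integrable (fun v : α × β => f v.2) q :=
    (integrable_condExp (m := MeasurableSpace.comap Prod.snd inferInstance)).congr hver.symm
  have hfp : Integrable (fun ω => f (T ω)) p := by
    have := (integrable_map_measure (hfm.comp measurable_snd).aestronglyMeasurable
      hφm.aemeasurable).mp hfq
    exact this
  refine (ae_eq_condExp_of_forall_setIntegral_eq hm
    ((integrable_const 1).indicator hUJ)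
    (fun s _ _ => hfp.integrableOn) ?_ ?_).trans ?_
  · rintro s ⟨B, hB, rfl⟩ -
    have h1 : ∫ ω in T ⁻¹' B, f (T ω) ∂p = ∫ v in Prod.snd ⁻¹' B, f v.2 ∂q := by
      rw [hq, setIntegral_map (measurable_snd hB) hsm.aestronglyMeasurable hφm.aemeasurable]
      rfl
    have h2 : ∫ v in Prod.snd ⁻¹' B, f v.2 ∂q
        = ∫ v in Prod.snd ⁻¹' B, ({v : α × β | v.1 ∈ J}.indicator fun _ => (1 : ℝ)) v ∂q := by
      rw [integral_congr_ae (ae_restrict_of_ae hver)]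
      exact setIntegral_condExp hm' hind ⟨B, hB, rfl⟩
    have h3 : ∫ v in Prod.snd ⁻¹' B, ({v : α × β | v.1 ∈ J}.indicator fun _ => (1 : ℝ)) v ∂q
        = (q (Prod.snd ⁻¹' B ∩ {v : α × β | v.1 ∈ J})).toReal := by
      rw [setIntegral_indicator hSmeas, setIntegral_const, smul_eq_mul, mul_one, measureReal_def]
    have h4 : q (Prod.snd ⁻¹' B ∩ {v : α × β | v.1 ∈ J})
        = p (T ⁻¹' B ∩ {ω | U ω ∈ J}) := by
      rw [hq, Measure.map_apply hφm ((measurable_snd hB).inter hSmeas)]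
      rfl
    have h5 : ∫ ω in T ⁻¹' B, ({ω | U ω ∈ J}.indicator fun _ => (1 : ℝ)) ω ∂p
        = (p (T ⁻¹' B ∩ {ω | U ω ∈ J})).toReal := by
      rw [setIntegral_indicator hUJ, setIntegral_const, smul_eq_mul, mul_one, measureReal_def]
    rw [h1, h2, h3, h4, h5]
  · exact StronglyMeasurable.aestronglyMeasurable
      ((hfm.comp (measurable_iff_comap_le.mpr le_rfl)).stronglyMeasurable)
  · exact Filter.EventuallyEq.rfl

/-- A version of a conditional probability is a.e. in `[0,1]`. -/
lemma version_mem_Icc (hT : Measurable T) (hU : Measurable U) (hJ : MeasurableSet J)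
    (hfm : Measurable f)
    (hver : (fun v : α × β => f v.2) =ᵐ[p.map fun ω => (U ω, T ω)]
      condProb (p.map fun ω => (U ω, T ω))
        (MeasurableSpace.comap Prod.snd inferInstance) {v | v.1 ∈ J}) :
    ∀ᵐ ω ∂p, 0 ≤ f (T ω) ∧ f (T ω) ≤ 1 := by
  set φ : Ω → α × β := fun ω => (U ω, T ω) with hφ
  have hφm : Measurable φ := hU.prodMk hT
  set q : Measure (α × β) := p.map φ with hq
  haveI : IsProbabilityMeasure q := Measure.isProbabilityMeasure_map hφm.aemeasurable
  have hm' : MeasurableSpace.comap (Prod.snd : α × β → β) inferInstance ≤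
      (inferInstance : MeasurableSpace (α × β)) := measurable_iff_comap_le.mp measurable_snd
  have h0 : (0 : α × β → ℝ) ≤ᵐ[q]
      condProb q (MeasurableSpace.comap Prod.snd inferInstance) {v | v.1 ∈ J} :=
    condExp_nonneg (Filter.Eventually.of_forall fun v => Set.indicator_nonneg (by simp) v)
  have h1 : condProb q (MeasurableSpace.comap Prod.snd inferInstance) {v | v.1 ∈ J}
      ≤ᵐ[q] fun _ => (1 : ℝ) := by
    have hle : ({v : α × β | v.1 ∈ J}.indicator fun _ => (1 : ℝ)) ≤ᵐ[q] fun _ => (1 : ℝ) :=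
      Filter.Eventually.of_forall fun v => Set.indicator_le_self' (by simp) v
    have := condExp_mono (μ := q) (m := MeasurableSpace.comap Prod.snd inferInstance)
      ((integrable_const 1).indicator (measurable_fst hJ)) (integrable_const 1) hle
    refine this.trans ?_
    rw [condExp_const hm']
  have hq0 : ∀ᵐ v ∂q, 0 ≤ f v.2 ∧ f v.2 ≤ 1 := by
    filter_upwards [hver, h0, h1] with v hv h0v h1v
    rw [hv]; exact ⟨h0v, h1v⟩
  have hmeas : MeasurableSet {v : α × β | 0 ≤ f v.2 ∧ f v.2 ≤ 1} := by
    have hc : Measurable fun v : α × β => f v.2 := hfm.comp measurable_snd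
    exact (hc measurableSet_Ici).inter (hc measurableSet_Iic)
  rw [hq, ae_map_iff hφm.aemeasurable hmeas] at hq0
  exact hq0

/-- Existence of a measurable version of the conditional probability. -/
lemma exists_version [Nonempty α] (hT : Measurable T) (hU : Measurable U)
    (hJ : MeasurableSet J) :
    ∃ f : β → ℝ, IsCondVersion (p.map fun ω => (U ω, T ω))
      (Prod.snd : α × β → β) {v | v.1 ∈ J} f := by
  set q : Measure (α × β) := p.map fun ω => (U ω, T ω) with hq
  set h := condProb q (MeasurableSpace.comap Prod.snd inferInstance) {v | v.1 ∈ J} with hh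
  have hhm : Measurable[MeasurableSpace.comap Prod.snd inferInstance] h :=
    stronglyMeasurable_condExp.measurable
  obtain ⟨φ, hφm, hφeq⟩ := exists_factor_snd hhm
  refine ⟨φ, hφm, ?_⟩
  have : (fun v : α × β => φ v.2) = h := funext fun v => (hφeq v).symm
  rw [this]

end Aux


section Aux2

/-- Decomposition of a conditional probability over a finite set of outcomes. -/
lemma condProb_sum {Ω' γ : Type*} (m : MeasurableSpace Ω') [MeasurableSpace Ω']
    [Fintype γ] [MeasurableSpace γ] [DiscreteMeasurableSpace γ]
    (p : Measure Ω') [IsFiniteMeasure p] (u : Ω' → γ) (hu : Measurable u) (J : Set γ)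
    [DecidableEq γ] [DecidablePred (· ∈ J)] :
    condProb p m {ω | u ω ∈ J} =ᵐ[p]
      fun ω => ∑ xa ∈ Finset.univ.filter (· ∈ J), condProb p m {ω' | u ω' = xa} ω := by
  unfold condProb
  have h : {ω | u ω ∈ J}.indicator (fun _ => (1 : ℝ))
      = ∑ xa ∈ Finset.univ.filter (· ∈ J),
          {ω' | u ω' = xa}.indicator (fun _ => (1 : ℝ)) := by
    funext ω
    rw [Finset.sum_apply]
    simp only [Set.indicator_apply, Set.mem_setOf_eq]
    rw [Finset.sum_ite_eq (Finset.univ.filter (· ∈ J)) (u ω) (fun _ => (1 : ℝ))]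
    simp
  rw [h]
  refine (condExp_finset_sum (fun xa _ => (integrable_const 1).indicator ?_) m).trans ?_
  · exact hu (MeasurableSet.of_discrete (s := {xa}))
  · exact Filter.Eventually.of_forall fun ω => by rw [Finset.sum_apply]

end Aux2


/-- **Corollary.**  An h.v. model `p` satisfies outcome independence if and only if
`p = p_a ⊗_{Y×Λ} p_b`, the fiber product over `Y × Λ` of its marginals `p_a` on `Xa × Y × Λ`
and `p_b` on `Xb × Y × Λ`. -/
theorem outcomeIndependence_iff_fiberProduct
    {Xa Xb Ya Yb Λ : Type*}
    [Fintype Xa] [MeasurableSpace Xa] [DiscreteMeasurableSpace Xa]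
    [Fintype Xb] [MeasurableSpace Xb] [DiscreteMeasurableSpace Xb]
    [MeasurableSpace Ya] [MeasurableSpace Yb] [MeasurableSpace Λ]
    (p : Measure ((Xa × Xb) × (Ya × Yb) × Λ)) [IsProbabilityMeasure p] :
    OutcomeIndependence p ↔ OutcomeFiber p := by
  classical
  set Ω := (Xa × Xb) × (Ya × Yb) × Λ
  have hTm : Measurable fun ω : Ω => ω.2 := measurable_snd
  have hUa : Measurable fun ω : Ω => ω.1.1 := measurable_fst.fst
  have hUb : Measurable fun ω : Ω => ω.1.2 := measurable_fst.snd
  have hmle : (mYL : MeasurableSpace Ω) ≤ (inferInstance : MeasurableSpace Ω) :=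
    measurable_iff_comap_le.mp hTm
  constructor
  · intro hOI J K M hJ hK hM f g hf hg
    unfold OutcomeIndependence at hOI
    obtain ⟨hfm, hfv⟩ := hf
    obtain ⟨hgm, hgv⟩ := hg
    have hFa : (fun ω : Ω => f ω.2) =ᵐ[p] condProb p mYL {ω : Ω | ω.1.1 ∈ J} :=
      transfer_version (U := fun ω : Ω => ω.1.1) hTm hUa hJ hfm hfv
    have hGb : (fun ω : Ω => g ω.2) =ᵐ[p] condProb p mYL {ω : Ω | ω.1.2 ∈ K} :=
      transfer_version (U := fun ω : Ω => ω.1.2) hTm hUb hK hgm hgv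
    set J' := Finset.univ.filter (· ∈ J) with hJ'
    set K' := Finset.univ.filter (· ∈ K) with hK'
    have hsum_a := condProb_sum mYL p (fun ω : Ω => ω.1.1) hUa J
    have hsum_b := condProb_sum mYL p (fun ω : Ω => ω.1.2) hUb K
    have hOI' : ∀ᵐ ω ∂p, ∀ x : Xa × Xb,
        condProb p mYL {ω' : Ω | ω'.1 = x} ω
          = condProb p mYL {ω' : Ω | ω'.1.1 = x.1} ω
            * condProb p mYL {ω' : Ω | ω'.1.2 = x.2} ω := ae_all_iff.mpr hOI
    have key : ∀ᵐ ω ∂p, f ω.2 * g ω.2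
        = ∑ x ∈ J' ×ˢ K', condProb p mYL {ω' : Ω | ω'.1 = x} ω := by
      filter_upwards [hFa, hGb, hsum_a, hsum_b, hOI'] with ω h1 h2 h3 h4 h5
      rw [h1, h2, h3, h4, Finset.sum_mul_sum, Finset.sum_product]
      exact Finset.sum_congr rfl fun xa _ => Finset.sum_congr rfl fun xb _ =>
        (h5 (xa, xb)).symm
    have hMpre : MeasurableSet[(mYL : MeasurableSpace Ω)] ((fun ω : Ω => ω.2) ⁻¹' M) :=
      ⟨M, hM, rfl⟩
    have hxmeas : ∀ x : Xa × Xb, MeasurableSet {ω : Ω | ω.1 = x} := fun x =>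
      measurable_fst (measurableSet_singleton x)
    have hRHS : ∫ w in M, f w * g w ∂(p.map fun ω : Ω => ω.2)
        = ∑ x ∈ J' ×ˢ K',
            (p ((fun ω : Ω => ω.2) ⁻¹' M ∩ {ω : Ω | ω.1 = x})).toReal := by
      have hsm : Measurable fun w : (Ya × Yb) × Λ => f w * g w := hfm.mul hgm
      rw [setIntegral_map hM hsm.aestronglyMeasurable hTm.aemeasurable]
      rw [integral_congr_ae (ae_restrict_of_ae key)]
      have hfs : ∫ ω in (fun ω : Ω => ω.2) ⁻¹' M,
            ∑ x ∈ J' ×ˢ K', condProb p mYL {ω' : Ω | ω'.1 = x} ω ∂p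
          = ∑ x ∈ J' ×ˢ K', ∫ ω in (fun ω : Ω => ω.2) ⁻¹' M,
              condProb p mYL {ω' : Ω | ω'.1 = x} ω ∂p :=
        integral_finset_sum _ fun x _ => integrable_condExp.integrableOn
      rw [hfs]
      refine Finset.sum_congr rfl fun x _ => ?_
      have h6 : ∫ ω in (fun ω : Ω => ω.2) ⁻¹' M, condProb p mYL {ω' : Ω | ω'.1 = x} ω ∂p
          = ∫ ω in (fun ω : Ω => ω.2) ⁻¹' M,
              ({ω' : Ω | ω'.1 = x}.indicator fun _ => (1 : ℝ)) ω ∂p :=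
        setIntegral_condExp hmle ((integrable_const 1).indicator (hxmeas x)) hMpre
      rw [h6, setIntegral_indicator (hxmeas x), setIntegral_const, smul_eq_mul, mul_one, measureReal_def]
    have hset : {ω : Ω | ω.1.1 ∈ J ∧ ω.1.2 ∈ K ∧ ω.2 ∈ M}
        = ⋃ x ∈ J' ×ˢ K', ((fun ω : Ω => ω.2) ⁻¹' M ∩ {ω : Ω | ω.1 = x}) := by
      ext ω
      simp only [Set.mem_setOf_eq, Set.mem_iUnion, Set.mem_inter_iff, Set.mem_preimage,
        Finset.mem_product, hJ', hK', Finset.mem_filter, Finset.mem_univ, true_and]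
      constructor
      · rintro ⟨h1, h2, h3⟩
        exact ⟨ω.1, ⟨h1, h2⟩, h3, rfl⟩
      · rintro ⟨x, ⟨h1, h2⟩, h3, h4⟩
        rw [h4]; exact ⟨h1, h2, h3⟩
    have hdisj : (↑(J' ×ˢ K') : Set (Xa × Xb)).PairwiseDisjoint
        fun x => (fun ω : Ω => ω.2) ⁻¹' M ∩ {ω : Ω | ω.1 = x} := by
      intro x _ y _ hxy
      refine Set.disjoint_left.mpr fun ω hx hy => hxy ?_
      rw [← hx.2, ← hy.2]
    rw [hset, measure_biUnion_finset hdisj fun x _ => (hM.preimage hTm).inter (hxmeas x),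
      ENNReal.toReal_sum fun x _ => measure_ne_top p _, hRHS]
  · intro hFib
    unfold OutcomeIndependence
    have hne : Nonempty Ω := by
      by_contra h
      have h0 : p Set.univ = 0 := by
        rw [Set.univ_eq_empty_iff.mpr (not_nonempty_iff.mp h)]; exact measure_empty
      rw [measure_univ] at h0
      exact one_ne_zero h0
    haveI : Nonempty Xa := ⟨hne.some.1.1⟩
    haveI : Nonempty Xb := ⟨hne.some.1.2⟩
    intro x
    obtain ⟨f, hfm, hfv⟩ := exists_version (p := p) (T := fun ω : Ω => ω.2)
      (U := fun ω : Ω => ω.1.1) hTm hUa (MeasurableSet.of_discrete (s := {x.1}))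
    obtain ⟨g, hgm, hgv⟩ := exists_version (p := p) (T := fun ω : Ω => ω.2)
      (U := fun ω : Ω => ω.1.2) hTm hUb (MeasurableSet.of_discrete (s := {x.2}))
    have hfb := version_mem_Icc (U := fun ω : Ω => ω.1.1) hTm hUa
      (MeasurableSet.of_discrete (s := {x.1})) hfm hfv
    have hgb := version_mem_Icc (U := fun ω : Ω => ω.1.2) hTm hUb
      (MeasurableSet.of_discrete (s := {x.2})) hgm hgv
    have hFa : (fun ω : Ω => f ω.2) =ᵐ[p] condProb p mYL {ω : Ω | ω.1.1 = x.1} :=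
      transfer_version (U := fun ω : Ω => ω.1.1) hTm hUa
        (MeasurableSet.of_discrete (s := {x.1})) hfm hfv
    have hGb : (fun ω : Ω => g ω.2) =ᵐ[p] condProb p mYL {ω : Ω | ω.1.2 = x.2} :=
      transfer_version (U := fun ω : Ω => ω.1.2) hTm hUb
        (MeasurableSet.of_discrete (s := {x.2})) hgm hgv
    have hsm : Measurable fun ω : Ω => f ω.2 * g ω.2 :=
      (hfm.comp hTm).mul (hgm.comp hTm)
    have hxmeas : MeasurableSet {ω : Ω | ω.1 = x} :=
      measurable_fst (measurableSet_singleton x)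
    have hg0 : (fun ω : Ω => f ω.2 * g ω.2) =ᵐ[p] condProb p mYL {ω : Ω | ω.1 = x} := by
      have hint : Integrable (fun ω : Ω => f ω.2 * g ω.2) p := by
        refine Integrable.mono' (integrable_const 1) hsm.aestronglyMeasurable ?_
        filter_upwards [hfb, hgb] with ω h1 h2
        rw [Real.norm_eq_abs, abs_mul, abs_of_nonneg h1.1, abs_of_nonneg h2.1]
        nlinarith [h1.1, h1.2, h2.1, h2.2]
      refine ae_eq_condExp_of_forall_setIntegral_eq hmle
        ((integrable_const 1).indicator hxmeas) (fun s _ _ => hint.integrableOn) ?_ ?_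
      · rintro s ⟨B, hB, rfl⟩ -
        have hmap : ∫ ω in (fun ω : Ω => ω.2) ⁻¹' B, f ω.2 * g ω.2 ∂p
            = ∫ w in B, f w * g w ∂(p.map fun ω : Ω => ω.2) := by
          have hsm' : Measurable fun w : (Ya × Yb) × Λ => f w * g w := hfm.mul hgm
          rw [setIntegral_map hB hsm'.aestronglyMeasurable hTm.aemeasurable]
        have hFib' := hFib {x.1} {x.2} B MeasurableSet.of_discrete
          MeasurableSet.of_discrete hB f g ⟨hfm, hfv⟩ ⟨hgm, hgv⟩
        have hseteq : {ω : Ω | ω.1.1 ∈ ({x.1} : Set Xa) ∧ ω.1.2 ∈ ({x.2} : Set Xb)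
              ∧ ω.2 ∈ B}
            = (fun ω : Ω => ω.2) ⁻¹' B ∩ {ω : Ω | ω.1 = x} := by
          ext ω
          simp only [Set.mem_setOf_eq, Set.mem_singleton_iff, Set.mem_inter_iff,
            Set.mem_preimage, Prod.ext_iff]
          tauto
        rw [hmap, ← hFib', hseteq, setIntegral_indicator hxmeas, setIntegral_const,
          smul_eq_mul, mul_one, measureReal_def]
      · exact StronglyMeasurable.aestronglyMeasurable
          (((hfm.mul hgm).comp (measurable_iff_comap_le.mpr le_rfl)).stronglyMeasurable)
    calc condProb p mYL {ω : Ω | ω.1 = x}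
        =ᵐ[p] fun ω : Ω => f ω.2 * g ω.2 := hg0.symm
      _ =ᵐ[p] fun ω : Ω =>
            condProb p mYL {ω' : Ω | ω'.1.1 = x.1} ω
            * condProb p mYL {ω' : Ω | ω'.1.2 = x.2} ω := by
          filter_upwards [hFa, hGb] with ω h1 h2
          rw [h1, h2]
end

section
/- An h.v. model p satisfies locality if and only if it satisfies both parameter independence and outcome independence. -/
open MeasureTheory Set

section Aux

lemma indicator_one_integrable {α : Type*} {m0 : MeasurableSpace α} (p : Measure α)
    [IsFiniteMeasure p] {S : Set α} (hS : MeasurableSet S) :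
    MeasureTheory.Integrable (S.indicator fun _ => (1 : ℝ)) p :=
  (integrable_const (1 : ℝ)).indicator hS

lemma condProb_sum_aux {α ι : Type*} {m0 : MeasurableSpace α} [Fintype ι]
    (p : Measure α) [IsFiniteMeasure p] (m : MeasurableSpace α)
    (S : Set α) (T : ι → Set α) (hT : ∀ i, MeasurableSet[m0] (T i))
    (h : ∀ a, S.indicator (fun _ => (1 : ℝ)) a = ∑ i, (T i).indicator (fun _ => (1 : ℝ)) a) :
    ∀ᵐ a ∂p, @condProb α m0 p m S a = ∑ i, @condProb α m0 p m (T i) a := by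
  have h' : S.indicator (fun _ => (1 : ℝ)) = ∑ i, (T i).indicator (fun _ => (1 : ℝ)) := by
    funext a; rw [h a, Finset.sum_apply]
  have hsum := condExp_finset_sum (μ := p) (m := m) (s := Finset.univ)
      (f := fun i => (T i).indicator (fun _ => (1 : ℝ)))
      (fun i _ => indicator_one_integrable p (hT i))
  unfold condProb
  rw [h']
  filter_upwards [hsum] with a ha
  rw [ha, Finset.sum_apply]

lemma condProb_univ_aux {α : Type*} {m0 : MeasurableSpace α} (p : Measure α)
    [IsFiniteMeasure p] (m : MeasurableSpace α) (hm : m ≤ m0) :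
    @condProb α m0 p m Set.univ =ᵐ[p] fun _ => (1 : ℝ) := by
  unfold condProb
  rw [Set.indicator_univ]
  rw [condExp_const (μ := p) hm (1 : ℝ)]

end Aux

/-- **Proposition (Jarrett).**  An h.v. model `p` satisfies locality if and only if it satisfies
both parameter independence and outcome independence. -/
theorem locality_iff_parameter_and_outcome
    {Xa Xb Ya Yb Λ : Type*}
    [Fintype Xa] [MeasurableSpace Xa] [DiscreteMeasurableSpace Xa]
    [Fintype Xb] [MeasurableSpace Xb] [DiscreteMeasurableSpace Xb]
    [MeasurableSpace Ya] [MeasurableSpace Yb] [MeasurableSpace Λ]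
    (p : Measure ((Xa × Xb) × (Ya × Yb) × Λ)) [IsProbabilityMeasure p] :
    Locality p ↔ ParameterIndependence p ∧ OutcomeIndependence p := by
  classical
  have hmYaL : mYaL ≤ (inferInstance : MeasurableSpace ((Xa × Xb) × (Ya × Yb) × Λ)) :=
    Measurable.comap_le (by fun_prop)
  have hmYbL : mYbL ≤ (inferInstance : MeasurableSpace ((Xa × Xb) × (Ya × Yb) × Λ)) :=
    Measurable.comap_le (by fun_prop)
  have hSx : ∀ x : Xa × Xb, MeasurableSet {ω : (Xa × Xb) × (Ya × Yb) × Λ | ω.1 = x} :=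
    fun x => measurable_fst (measurableSet_singleton x)
  have hSa : ∀ xa : Xa, MeasurableSet {ω : (Xa × Xb) × (Ya × Yb) × Λ | ω.1.1 = xa} :=
    fun xa => measurable_fst.fst (measurableSet_singleton xa)
  have hSb : ∀ xb : Xb, MeasurableSet {ω : (Xa × Xb) × (Ya × Yb) × Λ | ω.1.2 = xb} :=
    fun xb => measurable_fst.snd (measurableSet_singleton xb)
  have indA : ∀ xa : Xa, ∀ ω : (Xa × Xb) × (Ya × Yb) × Λ,
      ({ω : (Xa × Xb) × (Ya × Yb) × Λ | ω.1.1 = xa}).indicator (fun _ => (1 : ℝ)) ω =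
        ∑ xb : Xb, ({ω : (Xa × Xb) × (Ya × Yb) × Λ | ω.1 = (xa, xb)}).indicator
          (fun _ => (1 : ℝ)) ω := by
    intro xa ω
    simp only [Set.indicator_apply, Set.mem_setOf_eq, Prod.ext_iff]
    by_cases h : ω.1.1 = xa <;> simp [h, Finset.sum_ite_eq]
  have indA' : ∀ xb : Xb, ∀ ω : (Xa × Xb) × (Ya × Yb) × Λ,
      ({ω : (Xa × Xb) × (Ya × Yb) × Λ | ω.1.2 = xb}).indicator (fun _ => (1 : ℝ)) ω =
        ∑ xa : Xa, ({ω : (Xa × Xb) × (Ya × Yb) × Λ | ω.1 = (xa, xb)}).indicator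
          (fun _ => (1 : ℝ)) ω := by
    intro xb ω
    simp only [Set.indicator_apply, Set.mem_setOf_eq, Prod.ext_iff]
    by_cases h : ω.1.2 = xb <;> simp [h, Finset.sum_ite_eq]
  have indB : ∀ ω : (Xa × Xb) × (Ya × Yb) × Λ,
      (Set.univ : Set ((Xa × Xb) × (Ya × Yb) × Λ)).indicator (fun _ => (1 : ℝ)) ω =
        ∑ xb : Xb, ({ω : (Xa × Xb) × (Ya × Yb) × Λ | ω.1.2 = xb}).indicator
          (fun _ => (1 : ℝ)) ω := by
    intro ω
    simp [Set.indicator_apply, Finset.sum_ite_eq]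
  have indB' : ∀ ω : (Xa × Xb) × (Ya × Yb) × Λ,
      (Set.univ : Set ((Xa × Xb) × (Ya × Yb) × Λ)).indicator (fun _ => (1 : ℝ)) ω =
        ∑ xa : Xa, ({ω : (Xa × Xb) × (Ya × Yb) × Λ | ω.1.1 = xa}).indicator
          (fun _ => (1 : ℝ)) ω := by
    intro ω
    simp [Set.indicator_apply, Finset.sum_ite_eq]
  constructor
  · intro hloc
    have PIa : ∀ xa : Xa, condProb p mYL {ω | ω.1.1 = xa} =ᵐ[p]
        condProb p mYaL {ω | ω.1.1 = xa} := by
      intro xa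
      have h1 := condProb_sum_aux p mYL {ω | ω.1.1 = xa}
        (fun xb => {ω | ω.1 = (xa, xb)}) (fun xb => hSx _) (indA xa)
      have h2 : ∀ᵐ a ∂p, ∀ xb : Xb, condProb p mYL {ω | ω.1 = (xa, xb)} a =
          condProb p mYaL {ω | ω.1.1 = xa} a * condProb p mYbL {ω | ω.1.2 = xb} a :=
        ae_all_iff.2 fun xb => hloc (xa, xb)
      have h3 := condProb_sum_aux p mYbL Set.univ
        (fun xb => {ω | ω.1.2 = xb}) (fun xb => hSb xb) indB
      have h4 := condProb_univ_aux p mYbL hmYbL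
      filter_upwards [h1, h2, h3, h4] with a ha1 ha2 ha3 ha4
      rw [ha1]
      calc ∑ xb : Xb, condProb p mYL {ω | ω.1 = (xa, xb)} a
          = ∑ xb : Xb, condProb p mYaL {ω | ω.1.1 = xa} a *
              condProb p mYbL {ω | ω.1.2 = xb} a := Finset.sum_congr rfl fun xb _ => ha2 xb
        _ = condProb p mYaL {ω | ω.1.1 = xa} a *
              ∑ xb : Xb, condProb p mYbL {ω | ω.1.2 = xb} a := (Finset.mul_sum _ _ _).symm
        _ = condProb p mYaL {ω | ω.1.1 = xa} a := by rw [← ha3, ha4, mul_one]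
    have PIb : ∀ xb : Xb, condProb p mYL {ω | ω.1.2 = xb} =ᵐ[p]
        condProb p mYbL {ω | ω.1.2 = xb} := by
      intro xb
      have h1 := condProb_sum_aux p mYL {ω | ω.1.2 = xb}
        (fun xa => {ω | ω.1 = (xa, xb)}) (fun xa => hSx _) (indA' xb)
      have h2 : ∀ᵐ a ∂p, ∀ xa : Xa, condProb p mYL {ω | ω.1 = (xa, xb)} a =
          condProb p mYaL {ω | ω.1.1 = xa} a * condProb p mYbL {ω | ω.1.2 = xb} a :=
        ae_all_iff.2 fun xa => hloc (xa, xb)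
      have h3 := condProb_sum_aux p mYaL Set.univ
        (fun xa => {ω | ω.1.1 = xa}) (fun xa => hSa xa) indB'
      have h4 := condProb_univ_aux p mYaL hmYaL
      filter_upwards [h1, h2, h3, h4] with a ha1 ha2 ha3 ha4
      rw [ha1]
      calc ∑ xa : Xa, condProb p mYL {ω | ω.1 = (xa, xb)} a
          = ∑ xa : Xa, condProb p mYaL {ω | ω.1.1 = xa} a *
              condProb p mYbL {ω | ω.1.2 = xb} a := Finset.sum_congr rfl fun xa _ => ha2 xa
        _ = (∑ xa : Xa, condProb p mYaL {ω | ω.1.1 = xa} a) *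
              condProb p mYbL {ω | ω.1.2 = xb} a := (Finset.sum_mul _ _ _).symm
        _ = condProb p mYbL {ω | ω.1.2 = xb} a := by rw [← ha3, ha4, one_mul]
    refine ⟨⟨PIa, PIb⟩, ?_⟩
    intro x
    filter_upwards [hloc x, PIa x.1, PIb x.2] with a h1 h2 h3
    rw [h1, h2, h3]
  · rintro ⟨⟨PIa, PIb⟩, OI⟩ x
    filter_upwards [OI x, PIa x.1, PIb x.2] with a h1 h2 h3
    rw [h1, h2, h3]
end

section
/- If an h.v. model p satisfies strong determinism, then it satisfies weak determinism. -/
open MeasureTheory Set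

/-- If the conditional probability of an event `S` given `m` takes values in `{0,1}` a.s., then
it is a.s. equal to the indicator of `S`. -/
lemma indicator_ae_eq_condexp_of_mem01 {α : Type*} {m : MeasurableSpace α}
    [m0 : MeasurableSpace α]
    (hm : m ≤ m0) (p : Measure α) [IsFiniteMeasure p] {S : Set α}
    (hS : MeasurableSet S)
    (h01 : ∀ᵐ ω ∂p, (p[S.indicator (fun _ => (1 : ℝ))|m]) ω ∈ ({0, 1} : Set ℝ)) :
    S.indicator (fun _ => (1 : ℝ)) =ᵐ[p] p[S.indicator (fun _ => (1 : ℝ))|m] := by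
  set f := S.indicator (fun _ => (1 : ℝ)) with hf
  set g := p[f|m] with hg
  have hgm : StronglyMeasurable[m] g := stronglyMeasurable_condExp
  have hfi : Integrable f p := (integrable_const 1).indicator hS
  set A := g ⁻¹' {1} with hA
  have hAm : MeasurableSet[m] A := hgm.measurable (measurableSet_singleton 1)
  have hAmeas : MeasurableSet A := hm _ hAm
  have hIf : ∀ B : Set α, MeasurableSet B →
      ∫ ω in B, f ω ∂p = (p (S ∩ B)).toReal := by
    intro B hB
    rw [hf]
    rw [setIntegral_indicator hS]
    simp [Set.inter_comm, Measure.real]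
  -- On A, g = 1, and ∫_A g = ∫_A f gives p (S ∩ A) = p A
  have hintA : ∫ ω in A, g ω ∂p = ∫ ω in A, f ω ∂p := setIntegral_condExp hm hfi hAm
  have hIA : ∫ ω in A, g ω ∂p = (p A).toReal := by
    rw [setIntegral_congr_fun hAmeas (g := fun _ => (1 : ℝ)) fun ω hω => hω]
    simp [Measure.real]
  have hSA : p (S ∩ A) = p A := by
    have h' : (p A).toReal = (p (S ∩ A)).toReal := by
      rw [← hIA, hintA, hIf A hAmeas]
    exact ((ENNReal.toReal_eq_toReal_iff' (measure_ne_top p _) (measure_ne_top p _)).mp h').symm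
  have hAS : p (A \ S) = 0 := by
    have hsum : p (A ∩ S) + p (A \ S) = p (A ∩ S) + 0 := by
      rw [add_zero, measure_inter_add_diff A hS, ← hSA, Set.inter_comm]
    exact (ENNReal.add_right_inj (measure_ne_top p _)).mp hsum
  -- On Aᶜ, g = 0 a.e., and ∫_{Aᶜ} g = ∫_{Aᶜ} f gives p (S ∩ Aᶜ) = 0
  have hgc : ∫ ω in Aᶜ, g ω ∂p = 0 := by
    have h0 : g =ᵐ[p.restrict Aᶜ] fun _ => (0 : ℝ) := by
      filter_upwards [ae_restrict_of_ae h01, ae_restrict_mem hAmeas.compl] with ω h1 h2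
      have hne : g ω ≠ 1 := h2
      rcases h1 with h | h
      · exact h
      · exact absurd h hne
    rw [integral_congr_ae h0, integral_zero]
  have hSAc : p (S ∩ Aᶜ) = 0 := by
    have hintAc : ∫ ω in Aᶜ, g ω ∂p = ∫ ω in Aᶜ, f ω ∂p := setIntegral_condExp hm hfi hAm.compl
    have h' : (p (S ∩ Aᶜ)).toReal = 0 := by
      rw [← hIf Aᶜ hAmeas.compl, ← hintAc, hgc]
    exact (ENNReal.toReal_eq_zero_iff _).mp h' |>.resolve_right (measure_ne_top p _)
  have hnull : ∀ᵐ ω ∂p, ω ∉ (A \ S) ∪ (S ∩ Aᶜ) :=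
    measure_eq_zero_iff_ae_notMem.mp (measure_union_null hAS hSAc)
  filter_upwards [h01, hnull] with ω h1 h2
  simp only [Set.mem_union, not_or, Set.mem_diff, Set.mem_inter_iff, Set.mem_compl_iff,
    not_and, not_not] at h2
  by_cases hωS : ω ∈ S
  · have hωA : ω ∈ A := h2.2 hωS
    have : g ω = 1 := hωA
    simp [hf, Set.indicator_of_mem hωS, this]
  · have hωA : ω ∉ A := fun hmem => hωS (h2.1 hmem)
    have hne : g ω ≠ 1 := hωA
    have : g ω = 0 := by
      rcases h1 with h | h
      · exact h
      · exact absurd h hne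
    simp [hf, Set.indicator_of_notMem hωS, this]

/-- **Proposition.**  If an h.v. model `p` satisfies strong determinism, then it satisfies weak
determinism. -/
theorem weakDeterminism_of_strongDeterminism
    {Xa Xb Ya Yb Λ : Type*}
    [Fintype Xa] [MeasurableSpace Xa] [DiscreteMeasurableSpace Xa]
    [Fintype Xb] [MeasurableSpace Xb] [DiscreteMeasurableSpace Xb]
    [MeasurableSpace Ya] [MeasurableSpace Yb] [MeasurableSpace Λ]
    (p : Measure ((Xa × Xb) × (Ya × Yb) × Λ)) [IsProbabilityMeasure p]
    (h : StrongDeterminism p) : WeakDeterminism p := by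
  obtain ⟨ha, hb⟩ := h
  intro x
  -- the sub-σ-algebras are below the ambient one, and `mYaL, mYbL ≤ mYL`
  have hmYL : (mYL : MeasurableSpace ((Xa × Xb) × (Ya × Yb) × Λ)) ≤
      (inferInstance : MeasurableSpace ((Xa × Xb) × (Ya × Yb) × Λ)) :=
    measurable_snd.comap_le
  have hmaL : (mYaL : MeasurableSpace ((Xa × Xb) × (Ya × Yb) × Λ)) ≤ mYL := by
    have hcomp : (mYaL : MeasurableSpace ((Xa × Xb) × (Ya × Yb) × Λ)) =
        MeasurableSpace.comap (fun ω : (Xa × Xb) × (Ya × Yb) × Λ => ω.2)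
          (MeasurableSpace.comap (fun z : (Ya × Yb) × Λ => (z.1.1, z.2)) inferInstance) := by
      rw [MeasurableSpace.comap_comp]; rfl
    rw [hcomp, mYL]
    exact MeasurableSpace.comap_mono
      ((measurable_fst.fst.prodMk measurable_snd).comap_le)
  have hmbL : (mYbL : MeasurableSpace ((Xa × Xb) × (Ya × Yb) × Λ)) ≤ mYL := by
    have hcomp : (mYbL : MeasurableSpace ((Xa × Xb) × (Ya × Yb) × Λ)) =
        MeasurableSpace.comap (fun ω : (Xa × Xb) × (Ya × Yb) × Λ => ω.2)
          (MeasurableSpace.comap (fun z : (Ya × Yb) × Λ => (z.1.2, z.2)) inferInstance) := by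
      rw [MeasurableSpace.comap_comp]; rfl
    rw [hcomp, mYL]
    exact MeasurableSpace.comap_mono
      ((measurable_fst.snd.prodMk measurable_snd).comap_le)
  have hmaL0 : (mYaL : MeasurableSpace ((Xa × Xb) × (Ya × Yb) × Λ)) ≤
      (inferInstance : MeasurableSpace ((Xa × Xb) × (Ya × Yb) × Λ)) := hmaL.trans hmYL
  have hmbL0 : (mYbL : MeasurableSpace ((Xa × Xb) × (Ya × Yb) × Λ)) ≤
      (inferInstance : MeasurableSpace ((Xa × Xb) × (Ya × Yb) × Λ)) := hmbL.trans hmYL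
  -- measurable sets
  set Sa : Set ((Xa × Xb) × (Ya × Yb) × Λ) := {ω | ω.1.1 = x.1} with hSa
  set Sb : Set ((Xa × Xb) × (Ya × Yb) × Λ) := {ω | ω.1.2 = x.2} with hSb
  set Sx : Set ((Xa × Xb) × (Ya × Yb) × Λ) := {ω | ω.1 = x} with hSx
  have hSam : MeasurableSet Sa := measurable_fst.fst (measurableSet_singleton x.1)
  have hSbm : MeasurableSet Sb := measurable_fst.snd (measurableSet_singleton x.2)
  -- indicators and conditional probabilities
  set fa : ((Xa × Xb) × (Ya × Yb) × Λ) → ℝ := Sa.indicator (fun _ => (1 : ℝ)) with hfa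
  set fb : ((Xa × Xb) × (Ya × Yb) × Λ) → ℝ := Sb.indicator (fun _ => (1 : ℝ)) with hfb
  set ga := condProb p mYaL Sa with hga
  set gb := condProb p mYbL Sb with hgb
  have h01a : ∀ᵐ ω ∂p, ga ω ∈ ({0, 1} : Set ℝ) := ha x.1
  have h01b : ∀ᵐ ω ∂p, gb ω ∈ ({0, 1} : Set ℝ) := hb x.2
  have hfga : fa =ᵐ[p] ga := indicator_ae_eq_condexp_of_mem01 hmaL0 p hSam h01a
  have hfgb : fb =ᵐ[p] gb := indicator_ae_eq_condexp_of_mem01 hmbL0 p hSbm h01b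
  -- the indicator of `Sx` is the product of the indicators of `Sa` and `Sb`
  have hprod : Sx.indicator (fun _ => (1 : ℝ)) = fun ω => fa ω * fb ω := by
    funext ω
    by_cases h1 : ω.1.1 = x.1 <;> by_cases h2 : ω.1.2 = x.2 <;>
      simp [hSx, hfa, hfb, hSa, hSb, Set.indicator, Prod.ext_iff, h1, h2]
  -- `ga * gb` is mYL-strongly-measurable and integrable
  have hsmab : StronglyMeasurable[mYL] (fun ω => ga ω * gb ω) :=
    (stronglyMeasurable_condExp.mono hmaL).mul (stronglyMeasurable_condExp.mono hmbL)
  have hSxm : MeasurableSet Sx := by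
    have hx : Sx = Sa ∩ Sb := by ext ω; simp [hSx, hSa, hSb, Prod.ext_iff]
    rw [hx]; exact hSam.inter hSbm
  have hintx : Integrable (Sx.indicator fun _ => (1 : ℝ)) p :=
    (integrable_const 1).indicator hSxm
  have hintab : Integrable (fun ω => ga ω * gb ω) p := by
    refine (hintx.congr ?_)
    rw [hprod]
    exact hfga.mul hfgb
  -- conclude
  have hchain : condProb p mYL Sx =ᵐ[p] fun ω => ga ω * gb ω := by
    have h1 : condProb p mYL Sx =ᵐ[p] p[(fun ω => ga ω * gb ω)|mYL] := by
      rw [condProb, hprod]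
      exact condExp_congr_ae (hfga.mul hfgb)
    have h2 : p[(fun ω => ga ω * gb ω)|mYL] = fun ω => ga ω * gb ω :=
      condExp_of_stronglyMeasurable hmYL hsmab hintab
    rw [h2] at h1
    exact h1
  filter_upwards [hchain, h01a, h01b] with ω heq h1 h2
  rw [heq]
  rcases h1 with h1 | h1 <;> rcases h2 with h2 | h2 <;>
    simp_all
end

section
/- If an h.v. model p satisfies weak determinism, then it satisfies outcome independence. -/
open MeasureTheory Set

/-- Arithmetic key lemma: if `c : α × β → ℝ` takes values in `{0,1}` and sums to `1`, then
`c x = (∑ b, c (x.1, b)) * (∑ a, c (a, x.2))`. -/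
lemma sum01_mul {α β : Type*} [Fintype α] [Fintype β] (c : α × β → ℝ)
    (h01 : ∀ z, c z = 0 ∨ c z = 1) (hsum : ∑ z, c z = 1) (x : α × β) :
    c x = (∑ b, c (x.1, b)) * (∑ a, c (a, x.2)) := by
  classical
  obtain ⟨z0, hz0⟩ : ∃ z0, c z0 = 1 := by
    by_contra hcon
    push_neg at hcon
    have : ∀ z, c z = 0 := fun z => (h01 z).resolve_right (hcon z)
    simp [this] at hsum
  have hrest : ∑ w ∈ Finset.univ.erase z0, c w = 0 := by
    have h₁ := Finset.add_sum_erase Finset.univ c (Finset.mem_univ z0)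
    rw [hsum, hz0] at h₁
    linarith
  have hzero : ∀ z, z ≠ z0 → c z = 0 := by
    intro z hz
    have hnn : ∀ w ∈ Finset.univ.erase z0, 0 ≤ c w := by
      intro w _; rcases h01 w with hw | hw <;> simp [hw]
    exact (Finset.sum_eq_zero_iff_of_nonneg hnn).1 hrest z
      (Finset.mem_erase.2 ⟨hz, Finset.mem_univ z⟩)
  have hc : ∀ z, c z = if z = z0 then 1 else 0 := by
    intro z
    by_cases hz : z = z0
    · simp [hz, hz0]
    · simp [hz, hzero z hz]
  have hA : (∑ b, c (x.1, b)) = if x.1 = z0.1 then 1 else 0 := by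
    by_cases h1 : x.1 = z0.1 <;> simp [hc, Prod.ext_iff, h1]
  have hB : (∑ a, c (a, x.2)) = if x.2 = z0.2 then 1 else 0 := by
    by_cases h2 : x.2 = z0.2 <;> simp [hc, Prod.ext_iff, h2]
  rw [hc x, hA, hB]
  by_cases h1 : x.1 = z0.1 <;> by_cases h2 : x.2 = z0.2 <;>
    simp [h1, h2, Prod.ext_iff]

/-- **Proposition.**  If an h.v. model `p` satisfies weak determinism, then it satisfies outcome
independence. -/
theorem outcomeIndependence_of_weakDeterminism
    {Xa Xb Ya Yb Λ : Type*}
    [Fintype Xa] [MeasurableSpace Xa] [DiscreteMeasurableSpace Xa]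
    [Fintype Xb] [MeasurableSpace Xb] [DiscreteMeasurableSpace Xb]
    [MeasurableSpace Ya] [MeasurableSpace Yb] [MeasurableSpace Λ]
    (p : Measure ((Xa × Xb) × (Ya × Yb) × Λ)) [IsProbabilityMeasure p]
    (h : WeakDeterminism p) : OutcomeIndependence p := by
  classical
  intro x
  set Ω := (Xa × Xb) × (Ya × Yb) × Λ with hΩ
  have hmle : mYL ≤ (inferInstance : MeasurableSpace Ω) :=
    measurable_iff_comap_le.mp measurable_snd
  have hS : ∀ z : Xa × Xb, MeasurableSet {ω : Ω | ω.1 = z} := fun z =>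
    measurable_fst (measurableSet_singleton z)
  have hInt : ∀ z : Xa × Xb,
      Integrable (({ω : Ω | ω.1 = z}).indicator fun _ => (1 : ℝ)) p := fun z =>
    (integrable_const 1).indicator (hS z)
  set f : Xa × Xb → Ω → ℝ := fun z => condProb p mYL {ω : Ω | ω.1 = z} with hf
  -- (1) Alice's marginal conditional probability is the sum over Bob's outcomes
  have ha : condProb p mYL {ω : Ω | ω.1.1 = x.1} =ᵐ[p] fun ω => ∑ b : Xb, f (x.1, b) ω := by
    have hind : (({ω : Ω | ω.1.1 = x.1}).indicator fun _ => (1 : ℝ)) =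
        ∑ b : Xb, ({ω : Ω | ω.1 = (x.1, b)}).indicator fun _ => (1 : ℝ) := by
      funext ω
      simp only [Finset.sum_apply, Set.indicator_apply, Set.mem_setOf_eq, Prod.ext_iff]
      by_cases hω : ω.1.1 = x.1 <;> simp [hω]
    have h₁ : condProb p mYL {ω : Ω | ω.1.1 = x.1} =
        MeasureTheory.condExp mYL p
          (∑ b : Xb, ({ω : Ω | ω.1 = (x.1, b)}).indicator fun _ => (1 : ℝ)) := by
      rw [condProb, hind]
    rw [h₁]
    refine (condExp_finset_sum (fun b _ => hInt (x.1, b)) mYL).trans ?_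
    filter_upwards with ω
    simp [f, condProb]
  -- (2) likewise for Bob
  have hb : condProb p mYL {ω : Ω | ω.1.2 = x.2} =ᵐ[p] fun ω => ∑ a : Xa, f (a, x.2) ω := by
    have hind : (({ω : Ω | ω.1.2 = x.2}).indicator fun _ => (1 : ℝ)) =
        ∑ a : Xa, ({ω : Ω | ω.1 = (a, x.2)}).indicator fun _ => (1 : ℝ) := by
      funext ω
      simp only [Finset.sum_apply, Set.indicator_apply, Set.mem_setOf_eq, Prod.ext_iff]
      by_cases hω : ω.1.2 = x.2 <;> simp [hω]
    have h₁ : condProb p mYL {ω : Ω | ω.1.2 = x.2} =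
        MeasureTheory.condExp mYL p
          (∑ a : Xa, ({ω : Ω | ω.1 = (a, x.2)}).indicator fun _ => (1 : ℝ)) := by
      rw [condProb, hind]
    rw [h₁]
    refine (condExp_finset_sum (fun a _ => hInt (a, x.2)) mYL).trans ?_
    filter_upwards with ω
    simp [f, condProb]
  -- (3) the conditional probabilities sum to one a.e.
  have hsum1 : ∀ᵐ ω ∂p, ∑ z : Xa × Xb, f z ω = 1 := by
    have hind1 : (∑ z : Xa × Xb, ({ω : Ω | ω.1 = z}).indicator fun _ => (1 : ℝ)) =
        fun _ : Ω => (1 : ℝ) := by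
      funext ω
      simp [Finset.sum_apply, Set.indicator_apply]
    have h₂ := condExp_finset_sum (μ := p) (m := mYL) (fun z _ => hInt z)
      (s := Finset.univ) (f := fun z : Xa × Xb => ({ω : Ω | ω.1 = z}).indicator fun _ => (1 : ℝ))
    rw [hind1] at h₂
    rw [condExp_const hmle (1 : ℝ)] at h₂
    have h₃ := h₂
    filter_upwards [h₃] with ω hω
    have := hω.symm
    simpa [f, condProb, Finset.sum_apply] using this
  -- (4) weak determinism for all outcomes simultaneously
  have hae : ∀ᵐ ω ∂p, ∀ z : Xa × Xb, f z ω ∈ ({0, 1} : Set ℝ) := ae_all_iff.2 h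
  -- combine
  filter_upwards [ha, hb, hsum1, hae] with ω h1 h2 h3 h4
  rw [h1, h2]
  exact sum01_mul (fun z => f z ω) (fun z => by simpa using h4 z) h3 x
end

section
/- An h.v. model p satisfies strong determinism if and only if it satisfies both weak determinism and parameter independence. -/
open MeasureTheory Set

section AuxLemmas

open MeasureTheory Set

/-- If the conditional expectation of an indicator is a.e. `{0,1}`-valued, then the indicator
is a.e. equal to it. -/
lemma indicator_ae_eq_condexp_aux {α : Type*} {m m0 : MeasurableSpace α} (hm : m ≤ m0)
    (p : Measure α) [IsProbabilityMeasure p] {S : Set α} (hS : MeasurableSet S)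
    (h : ∀ᵐ ω ∂p, (p[S.indicator (fun _ => (1:ℝ))|m]) ω ∈ ({0,1} : Set ℝ)) :
    S.indicator (fun _ => (1:ℝ)) =ᵐ[p] p[S.indicator (fun _ => (1:ℝ))|m] := by
  set f : α → ℝ := S.indicator (fun _ => (1:ℝ)) with hf_def
  have hf_int : Integrable f p := (integrable_const (1:ℝ)).indicator hS
  set g : α → ℝ := p[f|m] with hg_def
  have hg_meas : Measurable[m] g := stronglyMeasurable_condExp.measurable
  have hA0 : MeasurableSet[m] (g ⁻¹' {0}) := hg_meas (measurableSet_singleton 0)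
  have hA1 : MeasurableSet[m] (g ⁻¹' {1}) := hg_meas (measurableSet_singleton 1)
  have h0 : ∀ᵐ ω ∂p, ω ∈ g ⁻¹' {0} → f ω = 0 := by
    have hint : ∫ ω in g ⁻¹' {0}, f ω ∂p = 0 := by
      rw [← setIntegral_condExp hm hf_int hA0]
      calc ∫ ω in g ⁻¹' {0}, g ω ∂p = ∫ _ in g ⁻¹' {0}, (0:ℝ) ∂p :=
            setIntegral_congr_fun (hm _ hA0) (fun ω hω => hω)
        _ = 0 := by simp
    have hnn : 0 ≤ᵐ[p.restrict (g ⁻¹' {0})] f := by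
      filter_upwards with ω
      exact Set.indicator_nonneg (fun _ _ => zero_le_one) ω
    have := (integral_eq_zero_iff_of_nonneg_ae hnn (hf_int.restrict)).mp hint
    rw [Filter.EventuallyEq, ae_restrict_iff' (hm _ hA0)] at this
    filter_upwards [this] with ω hω hω0 using hω hω0
  have h1 : ∀ᵐ ω ∂p, ω ∈ g ⁻¹' {1} → f ω = 1 := by
    have hgint : ∫ ω in g ⁻¹' {1}, g ω ∂p = (p (g ⁻¹' {1})).toReal := by
      calc ∫ ω in g ⁻¹' {1}, g ω ∂p = ∫ _ in g ⁻¹' {1}, (1:ℝ) ∂p :=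
            setIntegral_congr_fun (hm _ hA1) (fun ω hω => hω)
        _ = (p (g ⁻¹' {1})).toReal := by simp; rfl
    have hfint : ∫ ω in g ⁻¹' {1}, f ω ∂p = (p (g ⁻¹' {1})).toReal := by
      rw [← setIntegral_condExp hm hf_int hA1]; exact hgint
    have hint : ∫ ω in g ⁻¹' {1}, (1 - f ω) ∂p = 0 := by
      rw [integral_sub (integrable_const 1).restrict hf_int.restrict]
      simp [hfint, Measure.restrict_apply_univ, Measure.real]
    have hnn : 0 ≤ᵐ[p.restrict (g ⁻¹' {1})] fun ω => 1 - f ω := by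
      filter_upwards with ω
      have : f ω ≤ 1 := Set.indicator_le_self' (fun _ _ => zero_le_one) ω
      simp only [Pi.zero_apply]; linarith
    have := (integral_eq_zero_iff_of_nonneg_ae hnn
      ((integrable_const 1).restrict.sub hf_int.restrict)).mp hint
    rw [Filter.EventuallyEq, ae_restrict_iff' (hm _ hA1)] at this
    filter_upwards [this] with ω hω hω1
    have := hω hω1
    simp only [Pi.zero_apply] at this
    linarith
  filter_upwards [h, h0, h1] with ω hω hω0 hω1
  rcases hω with h | h
  · rw [hω0 h, h]
  · rw [hω1 h, h]

lemma mul_mem01_aux {a b : ℝ} (ha : a ∈ ({0,1} : Set ℝ)) (hb : b ∈ ({0,1} : Set ℝ)) :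
    a * b ∈ ({0,1} : Set ℝ) := by
  simp only [Set.mem_insert_iff, Set.mem_singleton_iff] at *
  rcases ha with h | h <;> rcases hb with h' | h' <;> simp [h, h']

lemma sum_mem_pair_aux {ι : Type*} (s : Finset ι) (c : ι → ℝ)
    (h01 : ∀ i ∈ s, c i ∈ ({0,1} : Set ℝ)) (hle : ∑ i ∈ s, c i ≤ 1) :
    ∑ i ∈ s, c i ∈ ({0,1} : Set ℝ) := by
  have heq : ∑ i ∈ s, c i = ((s.filter fun i => c i = 1).card : ℝ) := by
    rw [Finset.card_filter, Nat.cast_sum]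
    refine Finset.sum_congr rfl fun i hi => ?_
    have h := h01 i hi
    simp only [Set.mem_insert_iff, Set.mem_singleton_iff] at h
    rcases h with h | h <;> simp [h]
  rw [heq] at hle ⊢
  have hcard : (s.filter fun i => c i = 1).card ≤ 1 := by exact_mod_cast hle
  rcases Nat.le_one_iff_eq_zero_or_eq_one.mp hcard with h | h <;> simp [h]

lemma partial_sum_mem_aux {A B : Type*} [Fintype A] [Fintype B] (c : A → B → ℝ)
    (h01 : ∀ a b, c a b ∈ ({0,1} : Set ℝ)) (hsum : ∑ a, ∑ b, c a b = 1) (a : A) :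
    ∑ b, c a b ∈ ({0,1} : Set ℝ) := by
  have hnn : ∀ a b, (0:ℝ) ≤ c a b := fun a b => by
    have h := h01 a b
    simp only [Set.mem_insert_iff, Set.mem_singleton_iff] at h
    rcases h with h | h <;> simp [h]
  have hle : ∑ b, c a b ≤ 1 := by
    rw [← hsum]
    exact Finset.single_le_sum (f := fun a => ∑ b, c a b)
      (fun a _ => Finset.sum_nonneg fun b _ => hnn a b) (Finset.mem_univ a)
  exact sum_mem_pair_aux _ _ (fun b _ => h01 a b) hle

end AuxLemmas

/-- **Proposition.**  An h.v. model `p` satisfies strong determinism if and only if it satisfies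
both weak determinism and parameter independence. -/
theorem strongDeterminism_iff_weakDeterminism_and_parameterIndependence
    {Xa Xb Ya Yb Λ : Type*}
    [Fintype Xa] [MeasurableSpace Xa] [DiscreteMeasurableSpace Xa]
    [Fintype Xb] [MeasurableSpace Xb] [DiscreteMeasurableSpace Xb]
    [MeasurableSpace Ya] [MeasurableSpace Yb] [MeasurableSpace Λ]
    (p : Measure ((Xa × Xb) × (Ya × Yb) × Λ)) [IsProbabilityMeasure p] :
    StrongDeterminism p ↔ WeakDeterminism p ∧ ParameterIndependence p := by
  set Ω := (Xa × Xb) × (Ya × Yb) × Λ with hΩ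
  have hmYL : (mYL : MeasurableSpace Ω) ≤ (inferInstance : MeasurableSpace Ω) :=
    measurable_snd.comap_le
  have hmYaL : (mYaL : MeasurableSpace Ω) ≤ mYL := by
    unfold mYaL mYL
    rw [show (fun ω : Ω => (ω.2.1.1, ω.2.2)) =
        (fun q : (Ya × Yb) × Λ => (q.1.1, q.2)) ∘ (fun ω : Ω => ω.2) from rfl,
      ← MeasurableSpace.comap_comp]
    exact MeasurableSpace.comap_mono (measurable_fst.fst.prodMk measurable_snd).comap_le
  have hmYbL : (mYbL : MeasurableSpace Ω) ≤ mYL := by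
    unfold mYbL mYL
    rw [show (fun ω : Ω => (ω.2.1.2, ω.2.2)) =
        (fun q : (Ya × Yb) × Λ => (q.1.2, q.2)) ∘ (fun ω : Ω => ω.2) from rfl,
      ← MeasurableSpace.comap_comp]
    exact MeasurableSpace.comap_mono (measurable_fst.snd.prodMk measurable_snd).comap_le
  have hmYa : (mYaL : MeasurableSpace Ω) ≤ (inferInstance : MeasurableSpace Ω) :=
    hmYaL.trans hmYL
  have hmYb : (mYbL : MeasurableSpace Ω) ≤ (inferInstance : MeasurableSpace Ω) :=
    hmYbL.trans hmYL
  have hSa : ∀ xa : Xa, MeasurableSet {ω : Ω | ω.1.1 = xa} := fun xa =>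
    measurable_fst.fst (measurableSet_singleton xa)
  have hSb : ∀ xb : Xb, MeasurableSet {ω : Ω | ω.1.2 = xb} := fun xb =>
    measurable_fst.snd (measurableSet_singleton xb)
  have hSx : ∀ x : Xa × Xb, MeasurableSet {ω : Ω | ω.1 = x} := fun x =>
    measurable_fst (measurableSet_singleton x)
  have hind : ∀ (S : Set Ω), MeasurableSet S → Integrable (S.indicator fun _ => (1:ℝ)) p :=
    fun S hS => (integrable_const (1:ℝ)).indicator hS
  constructor
  · rintro ⟨ha, hb⟩
    have haeq : ∀ xa : Xa, ({ω : Ω | ω.1.1 = xa}).indicator (fun _ => (1:ℝ))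
        =ᵐ[p] condProb p mYaL {ω : Ω | ω.1.1 = xa} := fun xa =>
      indicator_ae_eq_condexp_aux hmYa p (hSa xa) (ha xa)
    have hbeq : ∀ xb : Xb, ({ω : Ω | ω.1.2 = xb}).indicator (fun _ => (1:ℝ))
        =ᵐ[p] condProb p mYbL {ω : Ω | ω.1.2 = xb} := fun xb =>
      indicator_ae_eq_condexp_aux hmYb p (hSb xb) (hb xb)
    have hpia : ∀ xa : Xa,
        condProb p mYL {ω : Ω | ω.1.1 = xa} =ᵐ[p] condProb p mYaL {ω : Ω | ω.1.1 = xa} := by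
      intro xa
      have h1 := condExp_congr_ae (m := mYL) (μ := p) (haeq xa)
      have h2 : p[condProb p mYaL {ω : Ω | ω.1.1 = xa}|mYL]
          = condProb p mYaL {ω : Ω | ω.1.1 = xa} :=
        condExp_of_stronglyMeasurable hmYL
          (stronglyMeasurable_condExp.mono hmYaL) integrable_condExp
      exact h1.trans (by rw [h2])
    have hpib : ∀ xb : Xb,
        condProb p mYL {ω : Ω | ω.1.2 = xb} =ᵐ[p] condProb p mYbL {ω : Ω | ω.1.2 = xb} := by
      intro xb
      have h1 := condExp_congr_ae (m := mYL) (μ := p) (hbeq xb)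
      have h2 : p[condProb p mYbL {ω : Ω | ω.1.2 = xb}|mYL]
          = condProb p mYbL {ω : Ω | ω.1.2 = xb} :=
        condExp_of_stronglyMeasurable hmYL
          (stronglyMeasurable_condExp.mono hmYbL) integrable_condExp
      exact h1.trans (by rw [h2])
    refine ⟨?_, hpia, hpib⟩
    intro x
    have hprod : ({ω : Ω | ω.1 = x}).indicator (fun _ => (1:ℝ)) =
        fun ω : Ω => ({ω' : Ω | ω'.1.1 = x.1}).indicator (fun _ => (1:ℝ)) ω *
          ({ω' : Ω | ω'.1.2 = x.2}).indicator (fun _ => (1:ℝ)) ω := by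
      funext ω
      by_cases h1 : ω.1.1 = x.1 <;> by_cases h2 : ω.1.2 = x.2 <;>
        simp [Set.indicator_apply, Prod.ext_iff, h1, h2]
    have hae : ({ω : Ω | ω.1 = x}).indicator (fun _ => (1:ℝ)) =ᵐ[p]
        fun ω : Ω => condProb p mYaL {ω' : Ω | ω'.1.1 = x.1} ω *
          condProb p mYbL {ω' : Ω | ω'.1.2 = x.2} ω := by
      rw [hprod]
      filter_upwards [haeq x.1, hbeq x.2] with ω h1 h2
      rw [h1, h2]
    have hint' : Integrable (fun ω : Ω => condProb p mYaL {ω' : Ω | ω'.1.1 = x.1} ω *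
        condProb p mYbL {ω' : Ω | ω'.1.2 = x.2} ω) p :=
      (hind _ (hSx x)).congr hae
    have h2 : p[(fun ω : Ω => condProb p mYaL {ω' : Ω | ω'.1.1 = x.1} ω *
          condProb p mYbL {ω' : Ω | ω'.1.2 = x.2} ω)|mYL]
        = fun ω : Ω => condProb p mYaL {ω' : Ω | ω'.1.1 = x.1} ω *
          condProb p mYbL {ω' : Ω | ω'.1.2 = x.2} ω :=
      condExp_of_stronglyMeasurable hmYL
        ((stronglyMeasurable_condExp.mono hmYaL).mul
          (stronglyMeasurable_condExp.mono hmYbL)) hint'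
    have h3 : condProb p mYL {ω : Ω | ω.1 = x} =ᵐ[p]
        fun ω : Ω => condProb p mYaL {ω' : Ω | ω'.1.1 = x.1} ω *
          condProb p mYbL {ω' : Ω | ω'.1.2 = x.2} ω :=
      (condExp_congr_ae (m := mYL) (μ := p) hae).trans (by rw [h2])
    filter_upwards [h3, ha x.1, hb x.2] with ω hω h1 h2
    rw [hω]
    exact mul_mem01_aux h1 h2
  · rintro ⟨hwd, hpi⟩
    have hall : ∀ᵐ ω ∂p, ∀ x : Xa × Xb,
        condProb p mYL {ω' : Ω | ω'.1 = x} ω ∈ ({0,1} : Set ℝ) := ae_all_iff.mpr hwd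
    have htot : (∑ x : Xa × Xb, condProb p mYL {ω' : Ω | ω'.1 = x}) =ᵐ[p]
        fun _ : Ω => (1:ℝ) := by
      have h2 : (fun _ : Ω => (1:ℝ)) =
          ∑ x : Xa × Xb, ({ω : Ω | ω.1 = x}).indicator (fun _ => (1:ℝ)) := by
        classical
        funext ω
        rw [Finset.sum_apply]
        have hterm : ∀ x : Xa × Xb, ({ω' : Ω | ω'.1 = x}).indicator (fun _ => (1:ℝ)) ω
            = if ω.1 = x then 1 else 0 := fun x => by
          by_cases h : ω.1 = x <;> simp [Set.indicator_apply, h]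
        simp only [hterm]
        rw [Finset.sum_ite_eq]
        simp
      have h3 := condExp_finset_sum (m := mYL) (μ := p)
        (s := (Finset.univ : Finset (Xa × Xb)))
        (f := fun x => ({ω : Ω | ω.1 = x}).indicator (fun _ => (1:ℝ)))
        (fun x _ => hind _ (hSx x))
      refine h3.symm.trans ?_
      rw [← h2, condExp_const hmYL]
    constructor
    · intro xa
      have hidty : ({ω : Ω | ω.1.1 = xa}).indicator (fun _ => (1:ℝ)) =
          ∑ xb : Xb, ({ω : Ω | ω.1 = (xa, xb)}).indicator (fun _ => (1:ℝ)) := by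
        classical
        funext ω
        rw [Finset.sum_apply]
        have hterm : ∀ xb : Xb, ({ω' : Ω | ω'.1 = (xa, xb)}).indicator (fun _ => (1:ℝ)) ω
            = if ω.1 = (xa, xb) then 1 else 0 := fun xb => by
          by_cases h : ω.1 = (xa, xb) <;> simp [Set.indicator_apply, h]
        simp only [hterm]
        by_cases h : ω.1.1 = xa
        · have hiff : ∀ xb : Xb, ω.1 = (xa, xb) ↔ ω.1.2 = xb := fun xb => by
            simp [Prod.ext_iff, h]
          simp only [hiff]
          rw [Finset.sum_ite_eq]
          simp [Set.indicator_apply, h]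
        · have hne : ∀ xb : Xb, ω.1 ≠ (xa, xb) := fun xb hc => h (by rw [hc])
          simp [Set.indicator_apply, h, hne]
      have hkey : condProb p mYL {ω : Ω | ω.1.1 = xa} =ᵐ[p]
          ∑ xb : Xb, condProb p mYL {ω' : Ω | ω'.1 = (xa, xb)} := by
        have := condExp_finset_sum (m := mYL) (μ := p)
          (s := (Finset.univ : Finset Xb))
          (f := fun xb => ({ω : Ω | ω.1 = (xa, xb)}).indicator (fun _ => (1:ℝ)))
          (fun xb _ => hind _ (hSx (xa, xb)))
        have heq : condProb p mYL {ω : Ω | ω.1.1 = xa} =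
            p[∑ xb : Xb, ({ω : Ω | ω.1 = (xa, xb)}).indicator (fun _ => (1:ℝ))|mYL] := by
          rw [condProb, hidty]
        rw [heq]
        exact this
      filter_upwards [hkey, htot, hall, hpi.1 xa] with ω hω1 hω2 hω3 hω4
      rw [← hω4, hω1, Finset.sum_apply]
      refine partial_sum_mem_aux (fun a b => condProb p mYL {ω' : Ω | ω'.1 = (a, b)} ω)
        (fun a b => hω3 (a, b)) ?_ xa
      rw [Finset.sum_apply] at hω2
      show ∑ a : Xa, ∑ b : Xb, condProb p mYL {ω' : Ω | ω'.1 = (a, b)} ω = 1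
      have h5 : ∑ x : Xa × Xb, condProb p mYL {ω' : Ω | ω'.1 = x} ω
          = ∑ a : Xa, ∑ b : Xb, condProb p mYL {ω' : Ω | ω'.1 = (a, b)} ω :=
        Fintype.sum_prod_type _
      rw [← h5]
      exact hω2
    · intro xb
      have hidty : ({ω : Ω | ω.1.2 = xb}).indicator (fun _ => (1:ℝ)) =
          ∑ xa : Xa, ({ω : Ω | ω.1 = (xa, xb)}).indicator (fun _ => (1:ℝ)) := by
        classical
        funext ω
        rw [Finset.sum_apply]
        have hterm : ∀ xa : Xa, ({ω' : Ω | ω'.1 = (xa, xb)}).indicator (fun _ => (1:ℝ)) ω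
            = if ω.1 = (xa, xb) then 1 else 0 := fun xa => by
          by_cases h : ω.1 = (xa, xb) <;> simp [Set.indicator_apply, h]
        simp only [hterm]
        by_cases h : ω.1.2 = xb
        · have hiff : ∀ xa : Xa, ω.1 = (xa, xb) ↔ ω.1.1 = xa := fun xa => by
            simp [Prod.ext_iff, h]
          simp only [hiff]
          rw [Finset.sum_ite_eq]
          simp [Set.indicator_apply, h]
        · have hne : ∀ xa : Xa, ω.1 ≠ (xa, xb) := fun xa hc => h (by rw [hc])
          simp [Set.indicator_apply, h, hne]
      have hkey : condProb p mYL {ω : Ω | ω.1.2 = xb} =ᵐ[p]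
          ∑ xa : Xa, condProb p mYL {ω' : Ω | ω'.1 = (xa, xb)} := by
        have := condExp_finset_sum (m := mYL) (μ := p)
          (s := (Finset.univ : Finset Xa))
          (f := fun xa => ({ω : Ω | ω.1 = (xa, xb)}).indicator (fun _ => (1:ℝ)))
          (fun xa _ => hind _ (hSx (xa, xb)))
        have heq : condProb p mYL {ω : Ω | ω.1.2 = xb} =
            p[∑ xa : Xa, ({ω : Ω | ω.1 = (xa, xb)}).indicator (fun _ => (1:ℝ))|mYL] := by
          rw [condProb, hidty]
        rw [heq]
        exact this
      filter_upwards [hkey, htot, hall, hpi.2 xb] with ω hω1 hω2 hω3 hω4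
      rw [← hω4, hω1, Finset.sum_apply]
      refine partial_sum_mem_aux (fun b a => condProb p mYL {ω' : Ω | ω'.1 = (a, b)} ω)
        (fun b a => hω3 (a, b)) ?_ xb
      rw [Finset.sum_apply] at hω2
      show ∑ b : Xb, ∑ a : Xa, condProb p mYL {ω' : Ω | ω'.1 = (a, b)} ω = 1
      have h5 : ∑ x : Xa × Xb, condProb p mYL {ω' : Ω | ω'.1 = x} ω
          = ∑ a : Xa, ∑ b : Xb, condProb p mYL {ω' : Ω | ω'.1 = (a, b)} ω :=
        Fintype.sum_prod_type _
      rw [Finset.sum_comm, ← h5]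
      exact hω2
end

section
/- An h.v. model p satisfies strong determinism if and only if it satisfies both weak determinism and locality. -/
open MeasureTheory Set

section AuxLemmas

open Filter

/-- If a conditional probability takes values in `{0,1}` a.e., it equals the indicator a.e. -/
private lemma condexp_indicator_eq_indicator_of_zero_one
    {α : Type*} {m : MeasurableSpace α} [hα : MeasurableSpace α] (hm : m ≤ hα)
    (p : MeasureTheory.Measure α) [MeasureTheory.IsProbabilityMeasure p]
    {S : Set α} (hS : MeasurableSet S)
    (h : ∀ᵐ ω ∂p, (MeasureTheory.condExp m p (S.indicator fun _ => (1:ℝ))) ω ∈ ({0,1} : Set ℝ)) :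
    MeasureTheory.condExp m p (S.indicator fun _ => (1:ℝ)) =ᵐ[p] S.indicator fun _ => (1:ℝ) := by
  set f := MeasureTheory.condExp m p (S.indicator fun _ => (1:ℝ)) with hfdef
  have hint : MeasureTheory.Integrable (S.indicator fun _ => (1:ℝ)) p :=
    (MeasureTheory.integrable_const 1).indicator hS
  set A := f ⁻¹' {1} with hAdef
  have hAm : MeasurableSet[m] A :=
    MeasureTheory.stronglyMeasurable_condExp.measurable (measurableSet_singleton (1:ℝ))
  have hfA : f =ᵐ[p] A.indicator fun _ => (1:ℝ) := by
    filter_upwards [h] with ω hω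
    simp only [Set.mem_insert_iff, Set.mem_singleton_iff] at hω
    rcases hω with h0 | h1
    · have hnA : ω ∉ A := by simp [hAdef, h0]
      simp [Set.indicator_of_notMem hnA, h0]
    · have hA : ω ∈ A := h1
      simp [Set.indicator_of_mem hA, h1]
  have key : ∀ B : Set α, MeasurableSet[m] B → p (B ∩ A) = p (B ∩ S) := by
    intro B hB
    have h1 : ∫ x in B, f x ∂p = ∫ x in B, S.indicator (fun _ => (1:ℝ)) x ∂p :=
      MeasureTheory.setIntegral_condExp (μ := p) hm hint hB
    have h2 : ∫ x in B, f x ∂p = ∫ x in B, A.indicator (fun _ => (1:ℝ)) x ∂p :=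
      MeasureTheory.setIntegral_congr_ae (μ := p) (hm B hB) (hfA.mono fun x hx _ => hx)
    have h3 : ∫ x in B, S.indicator (fun _ => (1:ℝ)) x ∂p = (p (B ∩ S)).toReal := by
      rw [MeasureTheory.setIntegral_indicator (μ := p) hS,
        MeasureTheory.setIntegral_const (μ := p), smul_eq_mul, mul_one, measureReal_def]
    have h4 : ∫ x in B, A.indicator (fun _ => (1:ℝ)) x ∂p = (p (B ∩ A)).toReal := by
      rw [MeasureTheory.setIntegral_indicator (μ := p) (hm A hAm),
        MeasureTheory.setIntegral_const (μ := p), smul_eq_mul, mul_one, measureReal_def]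
    have := h2.symm.trans h1
    rw [h3, h4] at this
    exact (ENNReal.toReal_eq_toReal_iff' (MeasureTheory.measure_ne_top p _)
      (MeasureTheory.measure_ne_top p _)).mp this
  have hAS : p (A \ S) = 0 := by
    have h5 : p (A ∩ A) = p (A ∩ S) := key A hAm
    rw [Set.inter_self] at h5
    have h6 : p (A \ (A ∩ S)) = p A - p (A ∩ S) :=
      MeasureTheory.measure_diff Set.inter_subset_left
        (((hm A hAm).inter hS).nullMeasurableSet (μ := p)) (MeasureTheory.measure_ne_top p _)
    rw [Set.diff_self_inter] at h6
    rw [h6, h5, tsub_self]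
  have hSA : p (S \ A) = 0 := by
    have h5 : p (Aᶜ ∩ A) = p (Aᶜ ∩ S) := key Aᶜ hAm.compl
    rw [Set.compl_inter_self, MeasureTheory.measure_empty] at h5
    rw [Set.diff_eq_compl_inter, ← h5]
  refine hfA.trans ?_
  have hae : ∀ᵐ ω ∂p, ω ∉ A \ S ∧ ω ∉ S \ A := by
    have h7 : p ((A \ S) ∪ (S \ A)) = 0 := MeasureTheory.measure_union_null hAS hSA
    filter_upwards [(MeasureTheory.measure_eq_zero_iff_ae_notMem (μ := p)).mp h7] with ω hω
    exact ⟨fun hc => hω (Set.mem_union_left _ hc), fun hc => hω (Set.mem_union_right _ hc)⟩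
  filter_upwards [hae] with ω hω
  obtain ⟨hω1, hω2⟩ := hω
  by_cases hωA : ω ∈ A
  · have hωS : ω ∈ S := by by_contra hc; exact hω1 ⟨hωA, hc⟩
    simp [Set.indicator_of_mem hωA, Set.indicator_of_mem hωS]
  · have hωS : ω ∉ S := fun hc => hω2 ⟨hc, hωA⟩
    simp [Set.indicator_of_notMem hωA, Set.indicator_of_notMem hωS]

private lemma sum_mem_zero_one {ι : Type*} (s : Finset ι) (t : ι → ℝ)
    (h : ∀ i ∈ s, t i ∈ ({0,1} : Set ℝ)) (h1 : ∑ i ∈ s, t i ≤ 1) :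
    ∑ i ∈ s, t i ∈ ({0,1} : Set ℝ) := by
  simp only [Set.mem_insert_iff, Set.mem_singleton_iff] at h ⊢
  by_cases hz : ∀ i ∈ s, t i = 0
  · exact Or.inl (Finset.sum_eq_zero hz)
  · push_neg at hz
    obtain ⟨i0, hi0, hne⟩ := hz
    have hone : t i0 = 1 := (h i0 hi0).resolve_left hne
    have hnn : ∀ i ∈ s, 0 ≤ t i := fun i hi => by rcases h i hi with h' | h' <;> simp [h']
    have hge : (1:ℝ) ≤ ∑ i ∈ s, t i := hone ▸ Finset.single_le_sum hnn hi0
    exact Or.inr (le_antisymm h1 hge)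

end AuxLemmas

/-- **Corollary.**  An h.v. model `p` satisfies strong determinism if and only if it satisfies
both weak determinism and locality. -/
theorem strongDeterminism_iff_weakDeterminism_and_locality
    {Xa Xb Ya Yb Λ : Type*}
    [Fintype Xa] [MeasurableSpace Xa] [DiscreteMeasurableSpace Xa]
    [Fintype Xb] [MeasurableSpace Xb] [DiscreteMeasurableSpace Xb]
    [MeasurableSpace Ya] [MeasurableSpace Yb] [MeasurableSpace Λ]
    (p : Measure ((Xa × Xb) × (Ya × Yb) × Λ)) [IsProbabilityMeasure p] :
    StrongDeterminism p ↔ WeakDeterminism p ∧ Locality p := by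
  classical
  have hmYL : (mYL : MeasurableSpace ((Xa × Xb) × (Ya × Yb) × Λ)) ≤
      (inferInstance : MeasurableSpace ((Xa × Xb) × (Ya × Yb) × Λ)) :=
    measurable_snd.comap_le
  have hmYaL : (mYaL : MeasurableSpace ((Xa × Xb) × (Ya × Yb) × Λ)) ≤ mYL := by
    have hg : Measurable (fun q : (Ya × Yb) × Λ => (q.1.1, q.2)) :=
      (measurable_fst.fst).prodMk measurable_snd
    calc (mYaL : MeasurableSpace ((Xa × Xb) × (Ya × Yb) × Λ))
        = MeasurableSpace.comap (fun ω : (Xa × Xb) × (Ya × Yb) × Λ => ω.2)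
            (MeasurableSpace.comap (fun q : (Ya × Yb) × Λ => (q.1.1, q.2)) inferInstance) := by
          rw [MeasurableSpace.comap_comp]; rfl
      _ ≤ mYL := MeasurableSpace.comap_mono hg.comap_le
  have hmYbL : (mYbL : MeasurableSpace ((Xa × Xb) × (Ya × Yb) × Λ)) ≤ mYL := by
    have hg : Measurable (fun q : (Ya × Yb) × Λ => (q.1.2, q.2)) :=
      (measurable_fst.snd).prodMk measurable_snd
    calc (mYbL : MeasurableSpace ((Xa × Xb) × (Ya × Yb) × Λ))
        = MeasurableSpace.comap (fun ω : (Xa × Xb) × (Ya × Yb) × Λ => ω.2)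
            (MeasurableSpace.comap (fun q : (Ya × Yb) × Λ => (q.1.2, q.2)) inferInstance) := by
          rw [MeasurableSpace.comap_comp]; rfl
      _ ≤ mYL := MeasurableSpace.comap_mono hg.comap_le
  have hmYaL' : (mYaL : MeasurableSpace ((Xa × Xb) × (Ya × Yb) × Λ)) ≤
      (inferInstance : MeasurableSpace ((Xa × Xb) × (Ya × Yb) × Λ)) :=
    hmYaL.trans hmYL
  have hmYbL' : (mYbL : MeasurableSpace ((Xa × Xb) × (Ya × Yb) × Λ)) ≤
      (inferInstance : MeasurableSpace ((Xa × Xb) × (Ya × Yb) × Λ)) :=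
    hmYbL.trans hmYL
  have hSx : ∀ x : Xa × Xb, MeasurableSet {ω' : (Xa × Xb) × (Ya × Yb) × Λ | ω'.1 = x} :=
    fun x => measurable_fst (measurableSet_singleton x)
  have hSa : ∀ xa : Xa, MeasurableSet {ω' : (Xa × Xb) × (Ya × Yb) × Λ | ω'.1.1 = xa} :=
    fun xa => measurable_fst.fst (measurableSet_singleton xa)
  have hSb : ∀ xb : Xb, MeasurableSet {ω' : (Xa × Xb) × (Ya × Yb) × Λ | ω'.1.2 = xb} :=
    fun xb => measurable_fst.snd (measurableSet_singleton xb)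
  constructor
  · rintro ⟨hsda, hsdb⟩
    have hfa : ∀ xa : Xa, condProb p mYaL {ω' : (Xa × Xb) × (Ya × Yb) × Λ | ω'.1.1 = xa} =ᵐ[p]
        ({ω' : (Xa × Xb) × (Ya × Yb) × Λ | ω'.1.1 = xa}).indicator fun _ => (1:ℝ) := fun xa =>
      condexp_indicator_eq_indicator_of_zero_one hmYaL' p (hSa xa) (hsda xa)
    have hfb : ∀ xb : Xb, condProb p mYbL {ω' : (Xa × Xb) × (Ya × Yb) × Λ | ω'.1.2 = xb} =ᵐ[p]
        ({ω' : (Xa × Xb) × (Ya × Yb) × Λ | ω'.1.2 = xb}).indicator fun _ => (1:ℝ) := fun xb =>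
      condexp_indicator_eq_indicator_of_zero_one hmYbL' p (hSb xb) (hsdb xb)
    have hprod : ∀ x : Xa × Xb,
        (fun ω => condProb p mYaL {ω' : (Xa × Xb) × (Ya × Yb) × Λ | ω'.1.1 = x.1} ω *
          condProb p mYbL {ω' : (Xa × Xb) × (Ya × Yb) × Λ | ω'.1.2 = x.2} ω) =ᵐ[p]
        ({ω' : (Xa × Xb) × (Ya × Yb) × Λ | ω'.1 = x}).indicator fun _ => (1:ℝ) := by
      intro x
      filter_upwards [hfa x.1, hfb x.2] with ω h1 h2
      simp only [h1, h2, Set.indicator_apply, Set.mem_setOf_eq]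
      by_cases hx : ω.1 = x
      · simp [hx]
      · have : ω.1.1 ≠ x.1 ∨ ω.1.2 ≠ x.2 := by
          by_contra hc
          push_neg at hc
          exact hx (Prod.ext hc.1 hc.2)
        rcases this with h | h <;> simp [h, hx]
    have hmeas : ∀ x : Xa × Xb, StronglyMeasurable[mYL]
        (fun ω => condProb p mYaL {ω' : (Xa × Xb) × (Ya × Yb) × Λ | ω'.1.1 = x.1} ω *
          condProb p mYbL {ω' : (Xa × Xb) × (Ya × Yb) × Λ | ω'.1.2 = x.2} ω) := fun x =>
      (stronglyMeasurable_condExp.mono hmYaL).mul (stronglyMeasurable_condExp.mono hmYbL)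
    have hintc : ∀ x : Xa × Xb, Integrable
        (fun ω => condProb p mYaL {ω' : (Xa × Xb) × (Ya × Yb) × Λ | ω'.1.1 = x.1} ω *
          condProb p mYbL {ω' : (Xa × Xb) × (Ya × Yb) × Λ | ω'.1.2 = x.2} ω) p := fun x =>
      ((integrable_const (1:ℝ)).indicator (hSx x)).congr (hprod x).symm
    have hloc : ∀ x : Xa × Xb,
        condProb p mYL {ω' : (Xa × Xb) × (Ya × Yb) × Λ | ω'.1 = x} =ᵐ[p]
        (fun ω => condProb p mYaL {ω' : (Xa × Xb) × (Ya × Yb) × Λ | ω'.1.1 = x.1} ω *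
          condProb p mYbL {ω' : (Xa × Xb) × (Ya × Yb) × Λ | ω'.1.2 = x.2} ω) := by
      intro x
      refine (MeasureTheory.condExp_congr_ae (m := mYL) (hprod x).symm).trans ?_
      rw [MeasureTheory.condExp_of_stronglyMeasurable hmYL (hmeas x) (hintc x)]
    refine ⟨fun x => ?_, fun x => hloc x⟩
    filter_upwards [hloc x, hfa x.1, hfb x.2] with ω h0 h1 h2
    rw [h0, h1, h2]
    simp only [Set.indicator_apply, Set.mem_insert_iff, Set.mem_singleton_iff]
    by_cases ha : ω ∈ {ω' : (Xa × Xb) × (Ya × Yb) × Λ | ω'.1.1 = x.1} <;>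
      by_cases hb : ω ∈ {ω' : (Xa × Xb) × (Ya × Yb) × Λ | ω'.1.2 = x.2} <;>
      simp [ha, hb]
  · rintro ⟨hwd, hloc⟩
    have hsum_b : ∀ᵐ ω ∂p, ∑ xb : Xb,
        condProb p mYbL {ω' : (Xa × Xb) × (Ya × Yb) × Λ | ω'.1.2 = xb} ω = 1 := by
      have h1 : (∑ xb : Xb,
          ({ω' : (Xa × Xb) × (Ya × Yb) × Λ | ω'.1.2 = xb}).indicator fun _ => (1:ℝ))
          = fun _ => (1:ℝ) := by
        funext ω
        simp [Set.indicator_apply, Finset.sum_ite_eq, Set.mem_setOf_eq]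
      have h2 := MeasureTheory.condExp_finset_sum (m := mYbL) (μ := p)
        (s := Finset.univ)
        (f := fun xb : Xb =>
          ({ω' : (Xa × Xb) × (Ya × Yb) × Λ | ω'.1.2 = xb}).indicator fun _ => (1:ℝ))
        (fun xb _ => (integrable_const (1:ℝ)).indicator (hSb xb))
      rw [h1, MeasureTheory.condExp_const hmYbL'] at h2
      filter_upwards [h2] with ω hω
      have := hω.symm
      simpa [Finset.sum_apply, condProb] using this
    have hsum_a : ∀ᵐ ω ∂p, ∑ xa : Xa,
        condProb p mYaL {ω' : (Xa × Xb) × (Ya × Yb) × Λ | ω'.1.1 = xa} ω = 1 := by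
      have h1 : (∑ xa : Xa,
          ({ω' : (Xa × Xb) × (Ya × Yb) × Λ | ω'.1.1 = xa}).indicator fun _ => (1:ℝ))
          = fun _ => (1:ℝ) := by
        funext ω
        simp [Set.indicator_apply, Finset.sum_ite_eq, Set.mem_setOf_eq]
      have h2 := MeasureTheory.condExp_finset_sum (m := mYaL) (μ := p)
        (s := Finset.univ)
        (f := fun xa : Xa =>
          ({ω' : (Xa × Xb) × (Ya × Yb) × Λ | ω'.1.1 = xa}).indicator fun _ => (1:ℝ))
        (fun xa _ => (integrable_const (1:ℝ)).indicator (hSa xa))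
      rw [h1, MeasureTheory.condExp_const hmYaL'] at h2
      filter_upwards [h2] with ω hω
      have := hω.symm
      simpa [Finset.sum_apply, condProb] using this
    have hl : ∀ᵐ ω ∂p, ∀ x : Xa × Xb,
        condProb p mYL {ω' : (Xa × Xb) × (Ya × Yb) × Λ | ω'.1 = x} ω =
        condProb p mYaL {ω' : (Xa × Xb) × (Ya × Yb) × Λ | ω'.1.1 = x.1} ω *
        condProb p mYbL {ω' : (Xa × Xb) × (Ya × Yb) × Λ | ω'.1.2 = x.2} ω :=
      ae_all_iff.mpr fun x => hloc x
    have hw : ∀ᵐ ω ∂p, ∀ x : Xa × Xb,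
        condProb p mYL {ω' : (Xa × Xb) × (Ya × Yb) × Λ | ω'.1 = x} ω ∈ ({0,1} : Set ℝ) :=
      ae_all_iff.mpr hwd
    constructor
    · intro xa
      filter_upwards [hl, hw, hsum_b, hsum_a] with ω hlω hwω hsbω hsaω
      have hkey : ∀ xa' : Xa, condProb p mYaL
          {ω' : (Xa × Xb) × (Ya × Yb) × Λ | ω'.1.1 = xa'} ω
          = ∑ xb : Xb, condProb p mYL {ω' : (Xa × Xb) × (Ya × Yb) × Λ | ω'.1 = (xa', xb)} ω := by
        intro xa'
        calc condProb p mYaL {ω' : (Xa × Xb) × (Ya × Yb) × Λ | ω'.1.1 = xa'} ω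
            = condProb p mYaL {ω' : (Xa × Xb) × (Ya × Yb) × Λ | ω'.1.1 = xa'} ω *
              ∑ xb : Xb, condProb p mYbL {ω' : (Xa × Xb) × (Ya × Yb) × Λ | ω'.1.2 = xb} ω := by
              rw [hsbω, mul_one]
          _ = ∑ xb : Xb, condProb p mYL
              {ω' : (Xa × Xb) × (Ya × Yb) × Λ | ω'.1 = (xa', xb)} ω := by
              rw [Finset.mul_sum]
              exact Finset.sum_congr rfl fun xb _ => (hlω (xa', xb)).symm
      have hnn : ∀ xa' : Xa,
          0 ≤ condProb p mYaL {ω' : (Xa × Xb) × (Ya × Yb) × Λ | ω'.1.1 = xa'} ω := by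
        intro xa'
        rw [hkey xa']
        refine Finset.sum_nonneg fun xb _ => ?_
        have := hwω (xa', xb)
        simp only [Set.mem_insert_iff, Set.mem_singleton_iff] at this
        rcases this with h' | h' <;> simp [h']
      have hle : condProb p mYaL {ω' : (Xa × Xb) × (Ya × Yb) × Λ | ω'.1.1 = xa} ω ≤ 1 := by
        calc condProb p mYaL {ω' : (Xa × Xb) × (Ya × Yb) × Λ | ω'.1.1 = xa} ω
            ≤ ∑ xa' : Xa, condProb p mYaL
              {ω' : (Xa × Xb) × (Ya × Yb) × Λ | ω'.1.1 = xa'} ω :=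
              Finset.single_le_sum (fun i _ => hnn i) (Finset.mem_univ xa)
          _ = 1 := hsaω
      rw [hkey xa] at hle ⊢
      exact sum_mem_zero_one _ _ (fun xb _ => hwω (xa, xb)) hle
    · intro xb
      filter_upwards [hl, hw, hsum_b, hsum_a] with ω hlω hwω hsbω hsaω
      have hkey : ∀ xb' : Xb, condProb p mYbL
          {ω' : (Xa × Xb) × (Ya × Yb) × Λ | ω'.1.2 = xb'} ω
          = ∑ xa : Xa, condProb p mYL {ω' : (Xa × Xb) × (Ya × Yb) × Λ | ω'.1 = (xa, xb')} ω := by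
        intro xb'
        calc condProb p mYbL {ω' : (Xa × Xb) × (Ya × Yb) × Λ | ω'.1.2 = xb'} ω
            = (∑ xa : Xa, condProb p mYaL
              {ω' : (Xa × Xb) × (Ya × Yb) × Λ | ω'.1.1 = xa} ω) *
              condProb p mYbL {ω' : (Xa × Xb) × (Ya × Yb) × Λ | ω'.1.2 = xb'} ω := by
              rw [hsaω, one_mul]
          _ = ∑ xa : Xa, condProb p mYL
              {ω' : (Xa × Xb) × (Ya × Yb) × Λ | ω'.1 = (xa, xb')} ω := by
              rw [Finset.sum_mul]
              exact Finset.sum_congr rfl fun xa _ => (hlω (xa, xb')).symm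
      have hnn : ∀ xb' : Xb,
          0 ≤ condProb p mYbL {ω' : (Xa × Xb) × (Ya × Yb) × Λ | ω'.1.2 = xb'} ω := by
        intro xb'
        rw [hkey xb']
        refine Finset.sum_nonneg fun xa _ => ?_
        have := hwω (xa, xb')
        simp only [Set.mem_insert_iff, Set.mem_singleton_iff] at this
        rcases this with h' | h' <;> simp [h']
      have hle : condProb p mYbL {ω' : (Xa × Xb) × (Ya × Yb) × Λ | ω'.1.2 = xb} ω ≤ 1 := by
        calc condProb p mYbL {ω' : (Xa × Xb) × (Ya × Yb) × Λ | ω'.1.2 = xb} ω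
            ≤ ∑ xb' : Xb, condProb p mYbL
              {ω' : (Xa × Xb) × (Ya × Yb) × Λ | ω'.1.2 = xb'} ω :=
              Finset.single_le_sum (fun i _ => hnn i) (Finset.mem_univ xb)
          _ = 1 := hsbω
      rw [hkey xb] at hle ⊢
      exact sum_mem_zero_one _ _ (fun xa _ => hwω (xa, xb)) hle
end

section
/- Every empirical model e can be realized by an h.v. model p such that p satisfies strong determinism and the hidden-variable space of p is finite. (Concretely, one may take Λ to be a copy of the finite set X = X_a × X_b with its power set as σ-algebra, let d be the 'diagonal' measure on X × Λ with d(x,x') = marg_X e({x}) if x = x' and 0 otherwise, and take p to be the fiber product d ⊗_X e over X; this p realizes e and satisfies strong determinism.) -/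
open MeasureTheory Set

/-- **Theorem (first determinization result).**  Every empirical model `e` can be realized by an
h.v. model `p` that satisfies strong determinism and whose hidden-variable space is finite. -/
theorem exists_stronglyDeterministic_finite_realization
    {Xa Xb Ya Yb : Type*}
    [Fintype Xa] [MeasurableSpace Xa] [DiscreteMeasurableSpace Xa]
    [Fintype Xb] [MeasurableSpace Xb] [DiscreteMeasurableSpace Xb]
    [MeasurableSpace Ya] [MeasurableSpace Yb]
    (e : Measure ((Xa × Xb) × (Ya × Yb))) [IsProbabilityMeasure e] :
    ∃ (Λ : Type) (_ : MeasurableSpace Λ) (_ : Finite Λ)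
      (p : Measure ((Xa × Xb) × (Ya × Yb) × Λ)),
        IsProbabilityMeasure p ∧
        p.map (fun ω => (ω.1, ω.2.1)) = e ∧
        StrongDeterminism p := by
  classical
  set n := Fintype.card (Xa × Xb) with hn
  let ι : (Xa × Xb) ≃ Fin n := Fintype.equivFin _
  letI mΛ : MeasurableSpace (Fin n) := ⊤
  haveI : DiscreteMeasurableSpace (Fin n) := ⟨fun _ => trivial⟩
  let f : (Xa × Xb) × (Ya × Yb) → (Xa × Xb) × (Ya × Yb) × Fin n :=
    fun z => (z.1, (z.2, ι z.1))
  have hf : Measurable f :=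
    measurable_fst.prodMk (measurable_snd.prodMk
      (Measurable.of_discrete.comp measurable_fst))
  let p : Measure ((Xa × Xb) × (Ya × Yb) × Fin n) := e.map f
  haveI hp : IsProbabilityMeasure p := Measure.isProbabilityMeasure_map hf.aemeasurable
  -- a.e., the hidden variable encodes the outcome
  have hA : MeasurableSet {ω : (Xa × Xb) × (Ya × Yb) × Fin n | ω.1 = ι.symm ω.2.2} :=
    measurableSet_eq_fun measurable_fst
      (Measurable.of_discrete.comp (measurable_snd.comp measurable_snd))
  have hae : ∀ᵐ ω ∂p, ω.1 = ι.symm ω.2.2 := by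
    rw [MeasureTheory.ae_map_iff hf.aemeasurable hA]
    filter_upwards with z
    simp [f]
  refine ⟨Fin n, mΛ, inferInstance, p, hp, ?_, ?_, ?_⟩
  · have hcomp : ((fun ω : (Xa × Xb) × (Ya × Yb) × Fin n => (ω.1, ω.2.1)) ∘ f) = id := rfl
    show (e.map f).map (fun ω => (ω.1, ω.2.1)) = e
    rw [Measure.map_map
        (measurable_fst.prodMk (measurable_fst.comp measurable_snd) :
          Measurable fun ω : (Xa × Xb) × (Ya × Yb) × Fin n => (ω.1, ω.2.1)) hf,
      hcomp, Measure.map_id]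
  · -- Alice
    intro xa
    have hm : (mYaL : MeasurableSpace ((Xa × Xb) × (Ya × Yb) × Fin n)) ≤
        (inferInstance : MeasurableSpace ((Xa × Xb) × (Ya × Yb) × Fin n)) :=
      Measurable.comap_le
        (((measurable_fst.comp (measurable_fst.comp measurable_snd)).prodMk
          (measurable_snd.comp measurable_snd) :
          Measurable fun ω : (Xa × Xb) × (Ya × Yb) × Fin n => (ω.2.1.1, ω.2.2)))
    have hT : MeasurableSet[mYaL] {ω : (Xa × Xb) × (Ya × Yb) × Fin n |
        (ι.symm ω.2.2).1 = xa} :=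
      ⟨{q : Ya × Fin n | (ι.symm q.2).1 = xa},
        ((Measurable.of_discrete (f := fun l : Fin n => (ι.symm l).1)).comp
          measurable_snd) (measurableSet_singleton xa), rfl⟩
    have hsm : StronglyMeasurable[mYaL]
        (({ω : (Xa × Xb) × (Ya × Yb) × Fin n | (ι.symm ω.2.2).1 = xa}).indicator
          fun _ => (1 : ℝ)) :=
      stronglyMeasurable_const.indicator hT
    have hint : Integrable
        (({ω : (Xa × Xb) × (Ya × Yb) × Fin n | (ι.symm ω.2.2).1 = xa}).indicator
          fun _ => (1 : ℝ)) p :=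
      (integrable_const (1 : ℝ)).indicator (hm _ hT)
    have hcongr : ({ω : (Xa × Xb) × (Ya × Yb) × Fin n | ω.1.1 = xa}).indicator
          (fun _ => (1 : ℝ)) =ᵐ[p]
        ({ω : (Xa × Xb) × (Ya × Yb) × Fin n | (ι.symm ω.2.2).1 = xa}).indicator
          (fun _ => (1 : ℝ)) := by
      filter_upwards [hae] with ω h
      simp only [Set.indicator_apply, Set.mem_setOf_eq, ← h]
    have key : condProb p mYaL {ω' : (Xa × Xb) × (Ya × Yb) × Fin n | ω'.1.1 = xa} =ᵐ[p]
        ({ω : (Xa × Xb) × (Ya × Yb) × Fin n | (ι.symm ω.2.2).1 = xa}).indicator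
          (fun _ => (1 : ℝ)) := by
      refine (condExp_congr_ae hcongr).trans ?_
      rw [condExp_of_stronglyMeasurable hm hsm hint]
    filter_upwards [key] with ω h
    rw [h]
    by_cases hω : (ι.symm ω.2.2).1 = xa <;> simp [Set.indicator_apply, hω]
  · -- Bob
    intro xb
    have hm : (mYbL : MeasurableSpace ((Xa × Xb) × (Ya × Yb) × Fin n)) ≤
        (inferInstance : MeasurableSpace ((Xa × Xb) × (Ya × Yb) × Fin n)) :=
      Measurable.comap_le
        (((measurable_snd.comp (measurable_fst.comp measurable_snd)).prodMk
          (measurable_snd.comp measurable_snd) :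
          Measurable fun ω : (Xa × Xb) × (Ya × Yb) × Fin n => (ω.2.1.2, ω.2.2)))
    have hT : MeasurableSet[mYbL] {ω : (Xa × Xb) × (Ya × Yb) × Fin n |
        (ι.symm ω.2.2).2 = xb} :=
      ⟨{q : Yb × Fin n | (ι.symm q.2).2 = xb},
        ((Measurable.of_discrete (f := fun l : Fin n => (ι.symm l).2)).comp
          measurable_snd) (measurableSet_singleton xb), rfl⟩
    have hsm : StronglyMeasurable[mYbL]
        (({ω : (Xa × Xb) × (Ya × Yb) × Fin n | (ι.symm ω.2.2).2 = xb}).indicator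
          fun _ => (1 : ℝ)) :=
      stronglyMeasurable_const.indicator hT
    have hint : Integrable
        (({ω : (Xa × Xb) × (Ya × Yb) × Fin n | (ι.symm ω.2.2).2 = xb}).indicator
          fun _ => (1 : ℝ)) p :=
      (integrable_const (1 : ℝ)).indicator (hm _ hT)
    have hcongr : ({ω : (Xa × Xb) × (Ya × Yb) × Fin n | ω.1.2 = xb}).indicator
          (fun _ => (1 : ℝ)) =ᵐ[p]
        ({ω : (Xa × Xb) × (Ya × Yb) × Fin n | (ι.symm ω.2.2).2 = xb}).indicator
          (fun _ => (1 : ℝ)) := by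
      filter_upwards [hae] with ω h
      simp only [Set.indicator_apply, Set.mem_setOf_eq, ← h]
    have key : condProb p mYbL {ω' : (Xa × Xb) × (Ya × Yb) × Fin n | ω'.1.2 = xb} =ᵐ[p]
        ({ω : (Xa × Xb) × (Ya × Yb) × Fin n | (ι.symm ω.2.2).2 = xb}).indicator
          (fun _ => (1 : ℝ)) := by
      refine (condExp_congr_ae hcongr).trans ?_
      rw [condExp_of_stronglyMeasurable hm hsm hint]
    filter_upwards [key] with ω h
    rw [h]
    by_cases hω : (ι.symm ω.2.2).2 = xb <;> simp [Set.indicator_apply, hω]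
end
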